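/- arXiv:2407.02624 — 4 statements merged into one kernel-verified Lean document; each statement's English description precedes it below -/
import Mathlib

section
/- Star-structure theorem: Given any instance (G = (V, E, α), k) of Broadcast Improvement with optimum broadcast β*, there exist at most 2k − 1 edge additions E' ⊆ V² ∖ E, all incident to a single shared vertex (i.e., forming a star), such that the broadcast of G + E' is at least β*α² / (12k² + 3). -/
open scoped Classical
set_option linter.unusedSectionVars false

variable {V : Type*} [Fintype V] [DecidableEq V]

/-- The proximity of `u` and `v` in the information graph `(V, E, α)`: the probability
that `u` and `v` are connected in a graph obtained by retaining each edge of `E`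
independently with probability `α`. -/
noncomputable def prox (E : Finset (Sym2 V)) (α : ℝ) (u v : V) : ℝ :=
  ∑ F ∈ E.powerset,
    if (SimpleGraph.fromEdgeSet (F : Set (Sym2 V))).Reachable u v then
      α ^ F.card * (1 - α) ^ (E \ F).card
    else 0

/-- The broadcast of an information graph: the minimum proximity over pairs of distinct
vertices. -/
noncomputable def broadcast (E : Finset (Sym2 V)) (α : ℝ) : ℝ :=
  ⨅ p : {p : V × V // p.1 ≠ p.2}, prox E α p.1.1 p.1.2

/-- The optimum broadcast achievable by adding at most `k` vertex pairs disjoint from `E`. -/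
noncomputable def optBroadcast (E : Finset (Sym2 V)) (α : ℝ) (k : ℕ) : ℝ :=
  ⨆ F : {F : Finset (Sym2 V) // F.card ≤ k ∧ ∀ e ∈ F, e ∉ E}, broadcast (E ∪ F.1) α

/-- The reach of a vertex `v`: the minimum proximity of `v` to any other vertex. -/
noncomputable def reach (E : Finset (Sym2 V)) (α : ℝ) (v : V) : ℝ :=
  ⨅ u : {u : V // u ≠ v}, prox E α v u.1

/-- The optimum reach of a source vertex `vs` achievable by adding at most `k`
vertex pairs disjoint from `E`. -/
noncomputable def optReach (E : Finset (Sym2 V)) (α : ℝ) (k : ℕ) (vs : V) : ℝ :=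
  ⨆ F : {F : Finset (Sym2 V) // F.card ≤ k ∧ ∀ e ∈ F, e ∉ E}, reach (E ∪ F.1) α vs

/-- The probability that, in a sampled graph, all edges of at least one member of the
family `P` of edge-lists are retained. -/
noncomputable def prPaths (E : Finset (Sym2 V)) (α : ℝ) (P : Set (List (Sym2 V))) : ℝ :=
  ∑ F ∈ E.powerset,
    if ∃ p ∈ P, ∀ e ∈ p, e ∈ F then α ^ F.card * (1 - α) ^ (E \ F).card
    else 0

namespace StarAux

variable {V : Type*} [Fintype V] [DecidableEq V]

noncomputable def pw (α : ℝ) (E F : Finset (Sym2 V)) : ℝ :=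
  α ^ F.card * (1 - α) ^ (E \ F).card

noncomputable def PrE (α : ℝ) (E : Finset (Sym2 V)) (P : Finset (Sym2 V) → Prop) : ℝ :=
  ∑ F ∈ E.powerset, if P F then pw α E F else 0

variable {α : ℝ}

lemma pw_nonneg (h0 : 0 ≤ α) (h1 : α ≤ 1) (E F : Finset (Sym2 V)) : 0 ≤ pw α E F :=
  mul_nonneg (pow_nonneg h0 _) (pow_nonneg (by linarith) _)

lemma sum_pw (E : Finset (Sym2 V)) : ∑ F ∈ E.powerset, pw α E F = 1 := by
  have h := Finset.prod_add (fun _ : Sym2 V => α) (fun _ : Sym2 V => (1 - α)) E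
  simp only [Finset.prod_const] at h
  have h2 : α + (1 - α) = 1 := by ring
  rw [h2, one_pow] at h
  simpa [pw] using h.symm

lemma PrE_nonneg (h0 : 0 ≤ α) (h1 : α ≤ 1) (E : Finset (Sym2 V)) (P : Finset (Sym2 V) → Prop) :
    0 ≤ PrE α E P := by
  refine Finset.sum_nonneg fun F _ => ?_
  split_ifs
  · exact pw_nonneg h0 h1 E F
  · exact le_refl 0

lemma PrE_mono (h0 : 0 ≤ α) (h1 : α ≤ 1) {E : Finset (Sym2 V)} {P Q : Finset (Sym2 V) → Prop}
    (h : ∀ F ∈ E.powerset, P F → Q F) : PrE α E P ≤ PrE α E Q := by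
  refine Finset.sum_le_sum fun F hF => ?_
  by_cases hP : P F
  · rw [if_pos hP, if_pos (h F hF hP)]
  · rw [if_neg hP]
    split_ifs
    · exact pw_nonneg h0 h1 E F
    · exact le_refl 0

lemma PrE_le_add (h0 : 0 ≤ α) (h1 : α ≤ 1) {E : Finset (Sym2 V)}
    {P Q R : Finset (Sym2 V) → Prop}
    (h : ∀ F ∈ E.powerset, P F → Q F ∨ R F) :
    PrE α E P ≤ PrE α E Q + PrE α E R := by
  rw [PrE, PrE, PrE, ← Finset.sum_add_distrib]
  refine Finset.sum_le_sum fun F hF => ?_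
  have hpw := pw_nonneg h0 h1 E F
  by_cases hP : P F
  · rcases h F hF hP with h' | h'
    · rw [if_pos hP, if_pos h']
      have : (0:ℝ) ≤ if R F then pw α E F else 0 := by split_ifs <;> simp [hpw]
      linarith
    · rw [if_pos hP, if_pos h']
      have : (0:ℝ) ≤ if Q F then pw α E F else 0 := by split_ifs <;> simp [hpw]
      linarith
  · rw [if_neg hP]
    have h1' : (0:ℝ) ≤ if Q F then pw α E F else 0 := by split_ifs <;> simp [hpw]
    have h2' : (0:ℝ) ≤ if R F then pw α E F else 0 := by split_ifs <;> simp [hpw]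
    linarith

lemma PrE_union_bound (h0 : 0 ≤ α) (h1 : α ≤ 1) {E : Finset (Sym2 V)} {ι : Type*}
    (s : Finset ι) (P : ι → Finset (Sym2 V) → Prop) :
    PrE α E (fun F => ∃ i ∈ s, P i F) ≤ ∑ i ∈ s, PrE α E (P i) := by
  simp only [PrE]
  rw [Finset.sum_comm]
  refine Finset.sum_le_sum fun F hF => ?_
  by_cases hP : ∃ i ∈ s, P i F
  · rw [if_pos hP]
    obtain ⟨i0, hi0, hPi0⟩ := hP
    have := Finset.single_le_sum (f := fun i => if P i F then pw α E F else 0)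
      (fun i _ => by split_ifs <;> simp [pw_nonneg h0 h1 E F]) hi0
    simpa [hPi0] using this
  · rw [if_neg hP]
    exact Finset.sum_nonneg fun i _ => by split_ifs <;> simp [pw_nonneg h0 h1 E F]

lemma sum_powerset_union {β : Type*} [AddCommMonoid β] {E S : Finset (Sym2 V)}
    (hd : Disjoint E S) (f : Finset (Sym2 V) → β) :
    ∑ F ∈ (E ∪ S).powerset, f F = ∑ G ∈ E.powerset, ∑ H ∈ S.powerset, f (G ∪ H) := by
  rw [← Finset.sum_product']
  refine Finset.sum_nbij' (fun F => (F ∩ E, F ∩ S)) (fun p => p.1 ∪ p.2) ?_ ?_ ?_ ?_ ?_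
  · intro F hF
    simp only [Finset.mem_product, Finset.mem_powerset]
    exact ⟨Finset.inter_subset_right, Finset.inter_subset_right⟩
  · intro p hp
    simp only [Finset.mem_product, Finset.mem_powerset] at hp ⊢
    exact Finset.union_subset_union hp.1 hp.2
  · intro F hF
    rw [Finset.mem_powerset] at hF
    show F ∩ E ∪ F ∩ S = F
    rw [← Finset.inter_union_distrib_left, Finset.inter_eq_left.mpr hF]
  · rintro ⟨G, H⟩ hp
    simp only [Finset.mem_product, Finset.mem_powerset] at hp
    have hGE : G ⊆ E := hp.1
    have hHS : H ⊆ S := hp.2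
    have h1 : H ∩ E = ∅ := by
      rw [Finset.eq_empty_iff_forall_notMem]
      intro x hx
      rw [Finset.mem_inter] at hx
      exact Finset.disjoint_right.mp hd (hHS hx.1) hx.2
    have h2 : G ∩ S = ∅ := by
      rw [Finset.eq_empty_iff_forall_notMem]
      intro x hx
      rw [Finset.mem_inter] at hx
      exact Finset.disjoint_left.mp hd (hGE hx.1) hx.2
    simp only [Prod.mk.injEq]
    constructor
    · rw [Finset.union_inter_distrib_right, h1, Finset.inter_eq_left.mpr hGE]
      simp
    · rw [Finset.union_inter_distrib_right, h2, Finset.inter_eq_left.mpr hHS]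
      simp
  · intro F hF
    rw [Finset.mem_powerset] at hF
    show f F = f (F ∩ E ∪ F ∩ S)
    rw [← Finset.inter_union_distrib_left, Finset.inter_eq_left.mpr hF]

lemma pw_union {E S G H : Finset (Sym2 V)} (hd : Disjoint E S) (hG : G ⊆ E) (hH : H ⊆ S) :
    pw α (E ∪ S) (G ∪ H) = pw α E G * pw α S H := by
  have hGH : Disjoint G H := hd.mono hG hH
  have h1 : (G ∪ H).card = G.card + H.card := Finset.card_union_of_disjoint hGH
  have hGE : ∀ x, x ∈ G → x ∈ E := fun x hx => hG hx
  have hHS : ∀ x, x ∈ H → x ∈ S := fun x hx => hH hx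
  have hES : ∀ x, x ∈ E → x ∉ S := fun x hx => Finset.disjoint_left.mp hd hx
  have h2 : (E ∪ S) \ (G ∪ H) = (E \ G) ∪ (S \ H) := by
    ext x
    simp only [Finset.mem_sdiff, Finset.mem_union]
    constructor
    · rintro ⟨hx | hx, hn⟩
      · exact Or.inl ⟨hx, fun hxG => hn (Or.inl hxG)⟩
      · exact Or.inr ⟨hx, fun hxH => hn (Or.inr hxH)⟩
    · rintro (⟨hx, hn⟩ | ⟨hx, hn⟩)
      · exact ⟨Or.inl hx, fun h => h.elim hn (fun hxH => hES x hx (hHS x hxH))⟩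
      · exact ⟨Or.inr hx, fun h => h.elim (fun hxG => hES x (hGE x hxG) hx) hn⟩
  have h3 : ((E \ G) ∪ (S \ H)).card = (E \ G).card + (S \ H).card :=
    Finset.card_union_of_disjoint (hd.mono (Finset.sdiff_subset) (Finset.sdiff_subset))
  rw [pw, h1, h2, h3, pow_add, pow_add]
  rw [pw, pw]
  ring

lemma PrE_marginal {E S : Finset (Sym2 V)} (hd : Disjoint E S) (Q : Finset (Sym2 V) → Prop) :
    PrE α (E ∪ S) (fun F => Q (F ∩ E)) = PrE α E Q := by
  rw [PrE, sum_powerset_union hd]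
  refine Finset.sum_congr rfl fun G hG => ?_
  rw [Finset.mem_powerset] at hG
  have key : ∀ H ∈ S.powerset,
      (if Q ((G ∪ H) ∩ E) then pw α (E ∪ S) (G ∪ H) else 0)
        = (if Q G then pw α E G else 0) * pw α S H := by
    intro H hH
    rw [Finset.mem_powerset] at hH
    have hHE : H ∩ E = ∅ := by
      rw [Finset.eq_empty_iff_forall_notMem]
      intro x hx
      rw [Finset.mem_inter] at hx
      exact Finset.disjoint_right.mp hd (hH hx.1) hx.2
    have hGE : (G ∪ H) ∩ E = G := by
      rw [Finset.union_inter_distrib_right, hHE, Finset.inter_eq_left.mpr hG]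
      simp
    rw [hGE, pw_union hd hG hH]
    split_ifs
    · rfl
    · simp
  rw [Finset.sum_congr rfl key, ← Finset.mul_sum, sum_pw, mul_one]

lemma PrE_force_aux (h0 : 0 ≤ α) (h1 : α ≤ 1) {E' T : Finset (Sym2 V)} (hd : Disjoint E' T)
    (P : Finset (Sym2 V) → Prop) :
    α ^ T.card * PrE α (E' ∪ T) (fun F => P (F ∪ T)) ≤ PrE α (E' ∪ T) P := by
  have hpwT : pw α T T = α ^ T.card := by
    rw [pw, Finset.sdiff_self, Finset.card_empty, pow_zero, mul_one]
  have hL : PrE α (E' ∪ T) (fun F => P (F ∪ T))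
      = ∑ G ∈ E'.powerset, (if P (G ∪ T) then pw α E' G else 0) := by
    rw [PrE, sum_powerset_union hd]
    refine Finset.sum_congr rfl fun G hG => ?_
    rw [Finset.mem_powerset] at hG
    have key : ∀ H ∈ T.powerset,
        (if P (G ∪ H ∪ T) then pw α (E' ∪ T) (G ∪ H) else 0)
          = (if P (G ∪ T) then pw α E' G else 0) * pw α T H := by
      intro H hH
      rw [Finset.mem_powerset] at hH
      have h1' : G ∪ H ∪ T = G ∪ T := by
        rw [Finset.union_assoc, Finset.union_eq_right.mpr hH]
      rw [h1', pw_union hd hG hH]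
      split_ifs
      · rfl
      · simp
    rw [Finset.sum_congr rfl key, ← Finset.mul_sum, sum_pw, mul_one]
  have hR : ∑ G ∈ E'.powerset, (if P (G ∪ T) then pw α E' G else 0) * α ^ T.card
      ≤ PrE α (E' ∪ T) P := by
    rw [PrE, sum_powerset_union hd]
    refine Finset.sum_le_sum fun G hG => ?_
    rw [Finset.mem_powerset] at hG
    have hmem : T ∈ T.powerset := Finset.mem_powerset_self T
    have hsingle := Finset.single_le_sum
      (f := fun H => if P (G ∪ H) then pw α (E' ∪ T) (G ∪ H) else 0)
      (fun H _ => by split_ifs <;> simp [pw_nonneg h0 h1]) hmem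
    refine le_trans ?_ hsingle
    rw [pw_union hd hG (le_refl T), hpwT]
    split_ifs
    · exact le_refl _
    · simp [mul_nonneg (pw_nonneg h0 h1 E' G) (pow_nonneg h0 T.card)]
  calc α ^ T.card * PrE α (E' ∪ T) (fun F => P (F ∪ T))
      = ∑ G ∈ E'.powerset, (if P (G ∪ T) then pw α E' G else 0) * α ^ T.card := by
        rw [hL, Finset.mul_sum]
        exact Finset.sum_congr rfl fun G _ => by ring
    _ ≤ PrE α (E' ∪ T) P := hR

lemma PrE_force (h0 : 0 ≤ α) (h1 : α ≤ 1) {E T : Finset (Sym2 V)} (hT : T ⊆ E)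
    (P : Finset (Sym2 V) → Prop) :
    α ^ T.card * PrE α E (fun F => P (F ∪ T)) ≤ PrE α E P := by
  have hE : E \ T ∪ T = E := Finset.sdiff_union_of_subset hT
  have := PrE_force_aux h0 h1 (E' := E \ T) (T := T) Finset.sdiff_disjoint P
  rwa [hE] at this

open SimpleGraph in
lemma reach_mono {F F' : Finset (Sym2 V)} (h : F ⊆ F') {u v : V}
    (hr : (fromEdgeSet (F : Set (Sym2 V))).Reachable u v) :
    (fromEdgeSet (F' : Set (Sym2 V))).Reachable u v :=
  hr.mono (fromEdgeSet_mono (by exact_mod_cast h))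

open SimpleGraph in
lemma walk_decomp {E F' : Finset (Sym2 V)} (W : Finset V)
    (hW : ∀ e ∈ F', ∀ x : V, x ∈ e → x ∈ W)
    {F : Finset (Sym2 V)} (hF : F ⊆ E ∪ F') {u v : V}
    (p : (fromEdgeSet (F : Set (Sym2 V))).Walk u v) :
    (fromEdgeSet ((F ∩ E : Finset (Sym2 V)) : Set (Sym2 V))).Reachable u v ∨
      ((∃ a ∈ W, (fromEdgeSet ((F ∩ E : Finset (Sym2 V)) : Set (Sym2 V))).Reachable u a) ∧
       (∃ b ∈ W, (fromEdgeSet ((F ∩ E : Finset (Sym2 V)) : Set (Sym2 V))).Reachable v b)) := by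
  induction p with
  | nil => exact Or.inl (Reachable.refl _)
  | @cons u x v h q ih =>
    rw [fromEdgeSet_adj] at h
    obtain ⟨hmem, hne⟩ := h
    have hmem' : s(u, x) ∈ F := by exact_mod_cast hmem
    rcases Finset.mem_union.mp (hF hmem') with hE | hF'
    · have hadj : (fromEdgeSet ((F ∩ E : Finset (Sym2 V)) : Set (Sym2 V))).Adj u x := by
        rw [fromEdgeSet_adj]
        exact ⟨by exact_mod_cast Finset.mem_inter.mpr ⟨hmem', hE⟩, hne⟩
      rcases ih with h' | ⟨⟨a, ha, hxa⟩, hb⟩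
      · exact Or.inl (hadj.reachable.trans h')
      · exact Or.inr ⟨⟨a, ha, hadj.reachable.trans hxa⟩, hb⟩
    · have huW : u ∈ W := hW _ hF' u (Sym2.mem_mk_left u x)
      have hxW : x ∈ W := hW _ hF' x (Sym2.mem_mk_right u x)
      rcases ih with h' | ⟨_, hb⟩
      · exact Or.inr ⟨⟨u, huW, Reachable.refl _⟩, ⟨x, hxW, h'.symm⟩⟩
      · exact Or.inr ⟨⟨u, huW, Reachable.refl _⟩, hb⟩

end StarAux

section MainHelpers
open StarAux SimpleGraph

variable {α : ℝ}

lemma prox_eq_PrE (E : Finset (Sym2 V)) (α : ℝ) (u v : V) :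
    prox E α u v
      = PrE α E (fun F => (SimpleGraph.fromEdgeSet (F : Set (Sym2 V))).Reachable u v) := by
  unfold prox StarAux.PrE StarAux.pw
  refine Finset.sum_congr rfl fun F _ => ?_
  by_cases h : (SimpleGraph.fromEdgeSet (F : Set (Sym2 V))).Reachable u v
  · rw [if_pos h, if_pos h]
  · rw [if_neg h, if_neg h]

lemma prox_nonneg (h0 : 0 ≤ α) (h1 : α ≤ 1) (E : Finset (Sym2 V)) (u v : V) :
    0 ≤ prox E α u v := by
  rw [prox_eq_PrE]; exact PrE_nonneg h0 h1 E _

lemma broadcast_nonneg (h0 : 0 ≤ α) (h1 : α ≤ 1) (E : Finset (Sym2 V)) :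
    0 ≤ broadcast E α := by
  rw [broadcast]
  rcases isEmpty_or_nonempty {p : V × V // p.1 ≠ p.2} with h | h
  · rw [Real.iInf_of_isEmpty]
  · exact le_ciInf fun p => prox_nonneg h0 h1 E _ _

lemma broadcast_le_prox (h0 : 0 ≤ α) (h1 : α ≤ 1) (E : Finset (Sym2 V)) {u v : V}
    (huv : u ≠ v) : broadcast E α ≤ prox E α u v := by
  refine ciInf_le ⟨0, ?_⟩ (⟨(u, v), huv⟩ : {p : V × V // p.1 ≠ p.2})
  rintro x ⟨p, rfl⟩
  exact prox_nonneg h0 h1 E _ _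

lemma prox_mono_edges (h0 : 0 ≤ α) (h1 : α ≤ 1) {E S : Finset (Sym2 V)}
    (hd : Disjoint E S) (u v : V) : prox E α u v ≤ prox (E ∪ S) α u v := by
  rw [prox_eq_PrE, prox_eq_PrE,
    ← PrE_marginal hd (fun G => (SimpleGraph.fromEdgeSet (G : Set (Sym2 V))).Reachable u v)]
  exact PrE_mono h0 h1 fun F hF hr => reach_mono Finset.inter_subset_left hr

lemma sym2_exists_mem (e : Sym2 V) : ∃ x : V, x ∈ e := by
  induction e using Sym2.ind with
  | _ x y => exact ⟨x, Sym2.mem_mk_left x y⟩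

lemma sym2_card_filter_le (e : Sym2 V) : (Finset.univ.filter (· ∈ e)).card ≤ 2 := by
  induction e using Sym2.ind with
  | _ x y =>
    have hsub : Finset.univ.filter (· ∈ s(x, y)) ⊆ {x, y} := by
      intro z hz
      rw [Finset.mem_filter] at hz
      rw [Sym2.mem_iff] at hz
      simp [hz.2]
    calc (Finset.univ.filter (· ∈ s(x, y))).card ≤ ({x, y} : Finset V).card :=
          Finset.card_le_card hsub
      _ ≤ 2 := Finset.card_insert_le x {y} |>.trans (by simp)

end MainHelpers

open StarAux SimpleGraph in
set_option maxHeartbeats 1000000 in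
/-- star-structure theorem. There are at most `2k - 1` new edges,
all incident to a single shared vertex, achieving broadcast at least
`β* α² / (12k² + 3)`. -/
theorem star_structure
    [Nonempty V]
    (E : Finset (Sym2 V)) (α : ℝ) (hα0 : 0 ≤ α) (hα1 : α ≤ 1) (k : ℕ) :
    ∃ (w : V) (S : Finset (Sym2 V)), S.card ≤ 2 * k - 1 ∧
      (∀ e ∈ S, e ∉ E ∧ w ∈ e) ∧
      optBroadcast E α k * α ^ 2 / (12 * (k : ℝ) ^ 2 + 3) ≤
        broadcast (E ∪ S) α := by
  have hd3 : (0:ℝ) < 12 * (k : ℝ) ^ 2 + 3 := by positivity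
  have hd31 : (1:ℝ) ≤ 12 * (k : ℝ) ^ 2 + 3 := by
    have : (0:ℝ) ≤ (k : ℝ) ^ 2 := sq_nonneg _
    linarith
  haveI hFne : Nonempty {F : Finset (Sym2 V) // F.card ≤ k ∧ ∀ e ∈ F, e ∉ E} :=
    ⟨⟨∅, by simp⟩⟩
  -- degenerate case: no pair of distinct vertices
  rcases isEmpty_or_nonempty {p : V × V // p.1 ≠ p.2} with hpe | hpn
  · refine ⟨Classical.arbitrary V, ∅, Nat.zero_le _, by simp, ?_⟩
    have hzero : ∀ F : {F : Finset (Sym2 V) // F.card ≤ k ∧ ∀ e ∈ F, e ∉ E},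
        broadcast (E ∪ F.1) α = 0 := fun F => by
      rw [broadcast, Real.iInf_of_isEmpty]
    have hopt : optBroadcast E α k = 0 := by
      rw [optBroadcast]
      simp only [hzero, ciSup_const]
    rw [hopt, broadcast, Real.iInf_of_isEmpty]
    simp
  -- choose an optimal solution F0
  obtain ⟨F0, hF0max⟩ := Finite.exists_max
    (fun F : {F : Finset (Sym2 V) // F.card ≤ k ∧ ∀ e ∈ F, e ∉ E} =>
      broadcast (E ∪ F.1) α)
  have hβle : optBroadcast E α k ≤ broadcast (E ∪ F0.1) α := ciSup_le hF0max
  have hβ0 : 0 ≤ optBroadcast E α k := by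
    have h := le_ciSup
      (f := fun F : {F : Finset (Sym2 V) // F.card ≤ k ∧ ∀ e ∈ F, e ∉ E} =>
        broadcast (E ∪ F.1) α)
      (Set.Finite.bddAbove (Set.finite_range _)) ⟨∅, by simp⟩
    rw [optBroadcast]
    exact le_trans (broadcast_nonneg hα0 hα1 _) h
  by_cases hF0e : F0.1 = ∅
  · refine ⟨Classical.arbitrary V, ∅, Nat.zero_le _, by simp, ?_⟩
    have h1 : broadcast (E ∪ ∅) α = broadcast (E ∪ F0.1) α := by rw [hF0e]
    have hle : α ^ 2 ≤ 1 := by nlinarith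
    have h2 : optBroadcast E α k * α ^ 2 ≤ optBroadcast E α k := by
      calc optBroadcast E α k * α ^ 2 ≤ optBroadcast E α k * 1 :=
            mul_le_mul_of_nonneg_left hle hβ0
        _ = optBroadcast E α k := mul_one _
    calc optBroadcast E α k * α ^ 2 / (12 * (k : ℝ) ^ 2 + 3)
        ≤ optBroadcast E α k * α ^ 2 := by
          apply div_le_self (mul_nonneg hβ0 (sq_nonneg α)) hd31
      _ ≤ optBroadcast E α k := h2
      _ ≤ broadcast (E ∪ F0.1) α := hβle
      _ = broadcast (E ∪ ∅) α := h1.symm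
  -- main case
  have hF0ne : F0.1.Nonempty := Finset.nonempty_iff_ne_empty.mpr hF0e
  have hk1 : 1 ≤ k := le_trans (Finset.card_pos.mpr hF0ne) F0.2.1
  have hdEF : Disjoint E F0.1 := Finset.disjoint_right.mpr F0.2.2
  set W : Finset V := Finset.univ.filter (fun x : V => ∃ e ∈ F0.1, x ∈ e) with hWdef
  have hWmem : ∀ e ∈ F0.1, ∀ x : V, x ∈ e → x ∈ W := by
    intro e he x hx
    rw [hWdef, Finset.mem_filter]
    exact ⟨Finset.mem_univ x, e, he, hx⟩
  have hWcard : W.card ≤ 2 * k := by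
    have hsub : W ⊆ F0.1.biUnion (fun e => Finset.univ.filter (· ∈ e)) := by
      intro x hx
      rw [hWdef, Finset.mem_filter] at hx
      obtain ⟨_, e, he, hxe⟩ := hx
      exact Finset.mem_biUnion.mpr ⟨e, he, Finset.mem_filter.mpr ⟨Finset.mem_univ x, hxe⟩⟩
    calc W.card ≤ (F0.1.biUnion (fun e => Finset.univ.filter (· ∈ e))).card :=
          Finset.card_le_card hsub
      _ ≤ ∑ e ∈ F0.1, (Finset.univ.filter (· ∈ e)).card := Finset.card_biUnion_le
      _ ≤ ∑ _e ∈ F0.1, 2 := Finset.sum_le_sum fun e _ => sym2_card_filter_le e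
      _ = 2 * F0.1.card := by rw [Finset.sum_const, smul_eq_mul, mul_comm]
      _ ≤ 2 * k := Nat.mul_le_mul_left 2 F0.2.1
  have hWne : W.Nonempty := by
    obtain ⟨e, he⟩ := hF0ne
    obtain ⟨x, hx⟩ := sym2_exists_mem e
    exact ⟨x, hWmem e he x hx⟩
  obtain ⟨w, hw⟩ := hWne
  set S : Finset (Sym2 V) :=
    ((W.erase w).image (fun x => s(w, x))).filter (fun e => e ∉ E) with hSdef
  have hSE : ∀ e ∈ S, e ∉ E := by
    intro e he
    rw [hSdef, Finset.mem_filter] at he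
    exact he.2
  have hdES : Disjoint E S := Finset.disjoint_right.mpr hSE
  have hScard : S.card ≤ 2 * k - 1 := by
    calc S.card ≤ ((W.erase w).image (fun x => s(w, x))).card := Finset.card_filter_le _ _
      _ ≤ (W.erase w).card := Finset.card_image_le
      _ = W.card - 1 := Finset.card_erase_of_mem hw
      _ ≤ 2 * k - 1 := Nat.sub_le_sub_right hWcard 1
  have hSstar : ∀ e ∈ S, e ∉ E ∧ w ∈ e := by
    intro e he
    refine ⟨hSE e he, ?_⟩
    rw [hSdef, Finset.mem_filter] at he
    obtain ⟨x, _, rfl⟩ := Finset.mem_image.mp he.1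
    exact Sym2.mem_mk_left w x
  have hstarEdge : ∀ x ∈ W, x ≠ w → s(w, x) ∈ E ∪ S := by
    intro x hx hxw
    by_cases hE : s(w, x) ∈ E
    · exact Finset.mem_union_left _ hE
    · refine Finset.mem_union_right _ ?_
      rw [hSdef, Finset.mem_filter]
      exact ⟨Finset.mem_image.mpr ⟨x, Finset.mem_erase.mpr ⟨hxw, hx⟩, rfl⟩, hE⟩
  refine ⟨w, S, hScard, hSstar, ?_⟩
  rw [broadcast]
  refine le_ciInf fun p => ?_
  obtain ⟨⟨u, v⟩, huv⟩ := p
  simp only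
  rw [div_le_iff₀ hd3]
  set t := prox (E ∪ S) α u v with htdef
  have ht0 : 0 ≤ t := prox_nonneg hα0 hα1 _ _ _
  -- events
  set Cw : Finset (Sym2 V) → Prop := fun G =>
    (∃ a ∈ W, (SimpleGraph.fromEdgeSet (G : Set (Sym2 V))).Reachable u a) ∧
    (∃ b ∈ W, (SimpleGraph.fromEdgeSet (G : Set (Sym2 V))).Reachable v b) with hCwdef
  set D : V × V → Finset (Sym2 V) → Prop := fun p G =>
    (SimpleGraph.fromEdgeSet (G : Set (Sym2 V))).Reachable u p.1 ∧
    (SimpleGraph.fromEdgeSet (G : Set (Sym2 V))).Reachable v p.2 with hDdef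
  have h1 : optBroadcast E α k ≤ prox (E ∪ F0.1) α u v :=
    hβle.trans (broadcast_le_prox hα0 hα1 _ huv)
  have h2 : prox (E ∪ F0.1) α u v
      ≤ PrE α (E ∪ F0.1)
          (fun F => (SimpleGraph.fromEdgeSet ((F ∩ E : Finset (Sym2 V)) : Set (Sym2 V))).Reachable u v)
        + PrE α (E ∪ F0.1) (fun F => Cw (F ∩ E)) := by
    rw [prox_eq_PrE]
    refine PrE_le_add hα0 hα1 fun F hF hr => ?_
    obtain ⟨pwalk⟩ := hr
    exact walk_decomp W hWmem (Finset.mem_powerset.mp hF) pwalk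
  have h3 : PrE α (E ∪ F0.1)
      (fun F => (SimpleGraph.fromEdgeSet ((F ∩ E : Finset (Sym2 V)) : Set (Sym2 V))).Reachable u v)
      = prox E α u v := by
    rw [prox_eq_PrE]
    exact PrE_marginal hdEF
      (fun G => (SimpleGraph.fromEdgeSet (G : Set (Sym2 V))).Reachable u v)
  have h4 : prox E α u v ≤ t := prox_mono_edges hα0 hα1 hdES u v
  have h5 : PrE α (E ∪ F0.1) (fun F => Cw (F ∩ E)) = PrE α E Cw := PrE_marginal hdEF _
  have h6 : PrE α E Cw ≤ ∑ q ∈ W ×ˢ W, PrE α E (D q) := by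
    refine le_trans (PrE_mono hα0 hα1 fun G _ hG => ?_) (PrE_union_bound hα0 hα1 (W ×ˢ W) D)
    obtain ⟨⟨a, ha, hua⟩, ⟨b, hb, hvb⟩⟩ := hG
    exact ⟨(a, b), Finset.mem_product.mpr ⟨ha, hb⟩, hua, hvb⟩
  have hCnn : 0 ≤ PrE α E Cw := PrE_nonneg hα0 hα1 E Cw
  have hWWne : (W ×ˢ W).Nonempty := ⟨(w, w), Finset.mem_product.mpr ⟨hw, hw⟩⟩
  set n : ℕ := (W ×ˢ W).card with hndef
  have hn0 : (0:ℝ) < n := by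
    have := Finset.card_pos.mpr hWWne
    exact_mod_cast this
  have hn4k : (n:ℝ) ≤ 4 * (k : ℝ) ^ 2 := by
    have h : n = W.card * W.card := by rw [hndef, Finset.card_product]
    have h2k : (W.card : ℝ) ≤ 2 * (k : ℝ) := by exact_mod_cast hWcard
    have h0W : (0:ℝ) ≤ (W.card : ℝ) := Nat.cast_nonneg _
    rw [h]
    push_cast
    nlinarith
  obtain ⟨⟨a, b⟩, habmem, hab⟩ :
      ∃ q ∈ W ×ˢ W, PrE α E Cw / n ≤ PrE α E (D q) := by
    refine Finset.exists_le_of_sum_le hWWne ?_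
    rw [Finset.sum_const, nsmul_eq_mul, ← hndef, mul_div_cancel₀ _ (ne_of_gt hn0)]
    exact h6
  have haW : a ∈ W := (Finset.mem_product.mp habmem).1
  have hbW : b ∈ W := (Finset.mem_product.mp habmem).2
  set T : Finset (Sym2 V) :=
    (({a, b} : Finset V).filter (fun x => x ≠ w)).image (fun x => s(w, x)) with hTdef
  have hT : T ⊆ E ∪ S := by
    intro e he
    rw [hTdef, Finset.mem_image] at he
    obtain ⟨x, hx, rfl⟩ := he
    rw [Finset.mem_filter] at hx
    have hxW : x ∈ W := by
      rcases Finset.mem_insert.mp hx.1 with h | h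
      · rwa [h]
      · rw [Finset.mem_singleton] at h; rwa [h]
    exact hstarEdge x hxW hx.2
  have hTcard : T.card ≤ 2 := by
    calc T.card ≤ (({a, b} : Finset V).filter (fun x => x ≠ w)).card := Finset.card_image_le
      _ ≤ ({a, b} : Finset V).card := Finset.card_filter_le _ _
      _ ≤ 2 := (Finset.card_insert_le a {b}).trans (by simp)
  -- the star connects a and b to w
  have hconn : ∀ x ∈ W, x ∈ ({a, b} : Finset V) → ∀ F : Finset (Sym2 V), T ⊆ F →
      (SimpleGraph.fromEdgeSet (F : Set (Sym2 V))).Reachable x w := by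
    intro x hxW hxab F hTF
    by_cases hxw : x = w
    · rw [hxw]
    · have hmemT : s(w, x) ∈ T := by
        rw [hTdef, Finset.mem_image]
        exact ⟨x, Finset.mem_filter.mpr ⟨hxab, hxw⟩, rfl⟩
      have hadj : (SimpleGraph.fromEdgeSet (F : Set (Sym2 V))).Adj x w := by
        rw [SimpleGraph.fromEdgeSet_adj]
        refine ⟨?_, hxw⟩
        rw [Sym2.eq_swap]
        exact_mod_cast hTF hmemT
      exact hadj.reachable
  have h7 : α ^ 2 * PrE α E (D (a, b)) ≤ t := by
    have hforce := PrE_force hα0 hα1 hT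
      (fun F => (SimpleGraph.fromEdgeSet (F : Set (Sym2 V))).Reachable u v)
    have hmono : PrE α (E ∪ S) (fun F => D (a, b) (F ∩ E))
        ≤ PrE α (E ∪ S)
            (fun F => (SimpleGraph.fromEdgeSet ((F ∪ T : Finset (Sym2 V)) : Set (Sym2 V))).Reachable u v) := by
      refine PrE_mono hα0 hα1 fun F hF hD => ?_
      obtain ⟨hua, hvb⟩ := hD
      have hsub : F ∩ E ⊆ F ∪ T := le_trans Finset.inter_subset_left Finset.subset_union_left
      have hTsub : T ⊆ F ∪ T := Finset.subset_union_right
      have hua' := reach_mono hsub hua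
      have hvb' := reach_mono hsub hvb
      have haw := hconn a haW (Finset.mem_insert_self a {b}) (F ∪ T) hTsub
      have hbw := hconn b hbW (by simp) (F ∪ T) hTsub
      exact ((hua'.trans haw).trans (hbw.symm)).trans hvb'.symm
    have hmarg : PrE α (E ∪ S) (fun F => D (a, b) (F ∩ E)) = PrE α E (D (a, b)) :=
      PrE_marginal hdES _
    have hpow : α ^ 2 ≤ α ^ T.card := pow_le_pow_of_le_one hα0 hα1 hTcard
    calc α ^ 2 * PrE α E (D (a, b))
        ≤ α ^ T.card * PrE α (E ∪ S)
            (fun F => (SimpleGraph.fromEdgeSet ((F ∪ T : Finset (Sym2 V)) : Set (Sym2 V))).Reachable u v) := by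
          rw [← hmarg]
          exact mul_le_mul hpow hmono (PrE_nonneg hα0 hα1 _ _) (pow_nonneg hα0 _)
      _ ≤ PrE α (E ∪ S)
            (fun F => (SimpleGraph.fromEdgeSet (F : Set (Sym2 V))).Reachable u v) := hforce
      _ = t := (prox_eq_PrE (E ∪ S) α u v).symm
  -- combine everything
  have hD0 : 0 ≤ PrE α E (D (a, b)) := PrE_nonneg hα0 hα1 E _
  have e1 : PrE α E Cw ≤ n * PrE α E (D (a, b)) := by
    rw [div_le_iff₀ hn0] at hab
    linarith [hab]
  have e2 : α ^ 2 * PrE α E Cw ≤ (n : ℝ) * t := by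
    calc α ^ 2 * PrE α E Cw ≤ α ^ 2 * ((n : ℝ) * PrE α E (D (a, b))) := by
          apply mul_le_mul_of_nonneg_left e1 (by positivity)
      _ = (n : ℝ) * (α ^ 2 * PrE α E (D (a, b))) := by ring
      _ ≤ (n : ℝ) * t := by
          apply mul_le_mul_of_nonneg_left h7 (le_of_lt hn0)
  have f1 : optBroadcast E α k ≤ t + PrE α E Cw := by
    calc optBroadcast E α k ≤ prox (E ∪ F0.1) α u v := h1
      _ ≤ PrE α (E ∪ F0.1)
            (fun F => (SimpleGraph.fromEdgeSet ((F ∩ E : Finset (Sym2 V)) : Set (Sym2 V))).Reachable u v)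
          + PrE α (E ∪ F0.1) (fun F => Cw (F ∩ E)) := h2
      _ = prox E α u v + PrE α E Cw := by rw [h3, h5]
      _ ≤ t + PrE α E Cw := by linarith [h4]
  have hα2le1 : α ^ 2 ≤ 1 := by nlinarith
  have hα2ge0 : 0 ≤ α ^ 2 := by positivity
  have key : optBroadcast E α k * α ^ 2 ≤ (12 * (k : ℝ) ^ 2 + 3) * t := by
    have g1 : optBroadcast E α k * α ^ 2 ≤ (t + PrE α E Cw) * α ^ 2 :=
      mul_le_mul_of_nonneg_right f1 hα2ge0
    have g2 : (t + PrE α E Cw) * α ^ 2 = t * α ^ 2 + α ^ 2 * PrE α E Cw := by ring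
    have g3 : t * α ^ 2 ≤ t := by nlinarith
    have g4 : (n : ℝ) * t ≤ 4 * (k : ℝ) ^ 2 * t :=
      mul_le_mul_of_nonneg_right hn4k ht0
    nlinarith
  linarith [key]
end

section
/- Two-edge log-submodularity of proximity to a star center: Let G = (V, E, α) be an information graph, let u, v ∈ V, and let e₁ = u w₁ and e₂ = u w₂ be two distinct vertex pairs incident to u and not in E. Then prox_{G + {e₁, e₂}}(v, u) · prox_G(v, u) ≤ prox_{G + {e₁}}(v, u) · prox_{G + {e₂}}(v, u). -/
open scoped Classical

variable {V : Type*} [Fintype V] [DecidableEq V]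

private lemma sdiff_insert_insert {e : Sym2 V} {E F : Finset (Sym2 V)}
    (heE : e ∉ E) : insert e E \ insert e F = E \ F := by
  ext x
  simp only [Finset.mem_sdiff, Finset.mem_insert, not_or]
  constructor
  · rintro ⟨(rfl | hx), h1, h2⟩
    · exact absurd rfl h1
    · exact ⟨hx, h2⟩
  · rintro ⟨hx, h2⟩
    exact ⟨Or.inr hx, fun h => heE (h ▸ hx), h2⟩

private lemma star_split {u w₁ w₂ : V} (hw₁ : w₁ ≠ u) (hw₂ : w₂ ≠ u)
    (s : Set (Sym2 V)) {x t : V}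
    (p : (SimpleGraph.fromEdgeSet (insert s(u, w₁) (insert s(u, w₂) s))).Walk x t)
    (ht : t = u) :
    (SimpleGraph.fromEdgeSet (insert s(u, w₁) s)).Reachable x u ∨
      (SimpleGraph.fromEdgeSet (insert s(u, w₂) s)).Reachable x u := by
  induction p with
  | nil => subst ht; exact Or.inl (SimpleGraph.Reachable.refl _)
  | @cons a b c h p ih =>
    subst ht
    have ih' := ih rfl
    rw [SimpleGraph.fromEdgeSet_adj] at h
    obtain ⟨hmem, hab⟩ := h
    rcases Set.mem_insert_iff.1 hmem with h1 | hmem'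
    · rcases Sym2.eq_iff.1 h1 with ⟨rfl, rfl⟩ | ⟨rfl, rfl⟩
      · exact Or.inl (SimpleGraph.Reachable.refl _)
      · exact Or.inl (SimpleGraph.Adj.reachable (by
          rw [SimpleGraph.fromEdgeSet_adj]
          exact ⟨by rw [Sym2.eq_swap]; exact Set.mem_insert _ _, hw₁⟩))
    · rcases Set.mem_insert_iff.1 hmem' with h2 | hs
      · rcases Sym2.eq_iff.1 h2 with ⟨rfl, rfl⟩ | ⟨rfl, rfl⟩
        · exact Or.inr (SimpleGraph.Reachable.refl _)
        · exact Or.inr (SimpleGraph.Adj.reachable (by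
            rw [SimpleGraph.fromEdgeSet_adj]
            exact ⟨by rw [Sym2.eq_swap]; exact Set.mem_insert _ _, hw₂⟩))
      · rcases ih' with hr | hr
        · exact Or.inl (((SimpleGraph.fromEdgeSet_adj _).2
            ⟨Set.mem_insert_of_mem _ hs, hab⟩).reachable.trans hr)
        · exact Or.inr (((SimpleGraph.fromEdgeSet_adj _).2
            ⟨Set.mem_insert_of_mem _ hs, hab⟩).reachable.trans hr)

/-- Conditioned proximity: edges in `C` are forced present. -/
private noncomputable def proxC (α : ℝ) (u v : V) (E C : Finset (Sym2 V)) : ℝ :=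
  ∑ F ∈ E.powerset,
    (if (SimpleGraph.fromEdgeSet ((C ∪ F : Finset (Sym2 V)) : Set (Sym2 V))).Reachable u v
      then (1 : ℝ) else 0) * (α ^ F.card * (1 - α) ^ (E \ F).card)

private lemma prox_eq_proxC (E : Finset (Sym2 V)) (α : ℝ) (u v : V) :
    prox E α u v = proxC α u v E ∅ := by
  unfold prox proxC
  refine Finset.sum_congr rfl fun F hF => ?_
  rw [Finset.empty_union]
  split_ifs <;> simp

private lemma proxC_insert (α : ℝ) (u v : V) {e : Sym2 V} {E : Finset (Sym2 V)}
    (he : e ∉ E) (C : Finset (Sym2 V)) :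
    proxC α u v (insert e E) C
      = α * proxC α u v E (insert e C) + (1 - α) * proxC α u v E C := by
  unfold proxC
  rw [Finset.sum_powerset_insert he, Finset.mul_sum, Finset.mul_sum, add_comm]
  congr 1
  · refine Finset.sum_congr rfl fun F hF => ?_
    have hFE : F ⊆ E := Finset.mem_powerset.1 hF
    have heF : e ∉ F := fun h => he (hFE h)
    rw [sdiff_insert_insert he, Finset.card_insert_of_notMem heF, pow_succ,
      Finset.union_insert, ← Finset.insert_union]
    ring
  · refine Finset.sum_congr rfl fun F hF => ?_
    have hFE : F ⊆ E := Finset.mem_powerset.1 hF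
    have heF : e ∉ F := fun h => he (hFE h)
    rw [Finset.insert_sdiff_of_notMem _ heF,
      Finset.card_insert_of_notMem (fun h => he (Finset.mem_sdiff.1 h).1), pow_succ]
    ring

private lemma proxC_nonneg (α : ℝ) (hα0 : 0 ≤ α) (hα1 : α ≤ 1) (u v : V)
    (E C : Finset (Sym2 V)) : 0 ≤ proxC α u v E C := by
  refine Finset.sum_nonneg fun F _ => ?_
  have : (0:ℝ) ≤ α ^ F.card * (1 - α) ^ (E \ F).card :=
    mul_nonneg (pow_nonneg hα0 _) (pow_nonneg (by linarith) _)
  split_ifs <;> simp [this]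

private lemma proxC_mono (α : ℝ) (hα0 : 0 ≤ α) (hα1 : α ≤ 1) (u v : V)
    (E : Finset (Sym2 V)) {C C' : Finset (Sym2 V)} (hCC : C ⊆ C') :
    proxC α u v E C ≤ proxC α u v E C' := by
  refine Finset.sum_le_sum fun F _ => ?_
  have hw : (0:ℝ) ≤ α ^ F.card * (1 - α) ^ (E \ F).card :=
    mul_nonneg (pow_nonneg hα0 _) (pow_nonneg (by linarith) _)
  have himp : (SimpleGraph.fromEdgeSet ((C ∪ F : Finset (Sym2 V)) : Set (Sym2 V))).Reachable u v →
      (SimpleGraph.fromEdgeSet ((C' ∪ F : Finset (Sym2 V)) : Set (Sym2 V))).Reachable u v :=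
    fun h => h.mono (SimpleGraph.fromEdgeSet_mono (by
      exact_mod_cast Finset.union_subset_union_left hCC))
  split_ifs with h1 h2 h2 <;> simp_all <;> nlinarith

/-- two-edge log-submodularity of proximity towards a star
center `u`. -/
theorem two_edge_log_submodularity
    (E : Finset (Sym2 V)) (α : ℝ) (hα0 : 0 ≤ α) (hα1 : α ≤ 1)
    (u v w₁ w₂ : V) (hw₁ : w₁ ≠ u) (hw₂ : w₂ ≠ u)
    (hne : s(u, w₁) ≠ s(u, w₂))
    (he₁ : s(u, w₁) ∉ E) (he₂ : s(u, w₂) ∉ E) :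
    prox (insert s(u, w₁) (insert s(u, w₂) E)) α v u * prox E α v u ≤
      prox (insert s(u, w₁) E) α v u * prox (insert s(u, w₂) E) α v u := by
  classical
  set e₁ := s(u, w₁)
  set e₂ := s(u, w₂)
  have he₁' : e₁ ∉ insert e₂ E := by
    simp only [Finset.mem_insert, not_or]
    exact ⟨hne, he₁⟩
  -- decompose the four prox values
  rw [prox_eq_proxC, prox_eq_proxC, prox_eq_proxC, prox_eq_proxC,
    proxC_insert α v u he₁' ∅, proxC_insert α v u he₂ _, proxC_insert α v u he₂ _,
    proxC_insert α v u he₁ ∅]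
  set A := proxC α v u E (insert e₂ (insert e₁ ∅)) with hA
  set B := proxC α v u E (insert e₁ ∅) with hB
  set C := proxC α v u E (insert e₂ ∅) with hC
  set D := proxC α v u E ∅ with hD
  have hD0 : 0 ≤ D := proxC_nonneg α hα0 hα1 v u E ∅
  have hDB : D ≤ B := proxC_mono α hα0 hα1 v u E (Finset.empty_subset _)
  have hDC : D ≤ C := proxC_mono α hα0 hα1 v u E (Finset.empty_subset _)
  have hACBD : A + D ≤ B + C := by
    rw [hA, hB, hC, hD]
    unfold proxC
    rw [← Finset.sum_add_distrib, ← Finset.sum_add_distrib]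
    refine Finset.sum_le_sum fun F _ => ?_
    have hw : (0:ℝ) ≤ α ^ F.card * (1 - α) ^ (E \ F).card :=
      mul_nonneg (pow_nonneg hα0 _) (pow_nonneg (by linarith) _)
    have hset : ((insert e₂ (insert e₁ ∅) ∪ F : Finset (Sym2 V)) : Set (Sym2 V))
        = insert e₁ (insert e₂ (F : Set (Sym2 V))) := by
      simp only [Finset.coe_union, Finset.coe_insert, Finset.coe_empty]
      rw [Set.insert_comm]
      simp [Set.insert_union]
    have hset1 : ((insert e₁ ∅ ∪ F : Finset (Sym2 V)) : Set (Sym2 V))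
        = insert e₁ (F : Set (Sym2 V)) := by
      simp [Set.insert_union]
    have hset2 : ((insert e₂ ∅ ∪ F : Finset (Sym2 V)) : Set (Sym2 V))
        = insert e₂ (F : Set (Sym2 V)) := by
      simp [Set.insert_union]
    have hsetD : ((∅ ∪ F : Finset (Sym2 V)) : Set (Sym2 V)) = (F : Set (Sym2 V)) := by
      simp
    have hstar :
        (SimpleGraph.fromEdgeSet ((insert e₂ (insert e₁ ∅) ∪ F : Finset (Sym2 V)) :
          Set (Sym2 V))).Reachable v u →
        (SimpleGraph.fromEdgeSet ((insert e₁ ∅ ∪ F : Finset (Sym2 V)) :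
          Set (Sym2 V))).Reachable v u ∨
        (SimpleGraph.fromEdgeSet ((insert e₂ ∅ ∪ F : Finset (Sym2 V)) :
          Set (Sym2 V))).Reachable v u := by
      rw [hset, hset1, hset2]
      intro h
      obtain ⟨p⟩ := h
      exact star_split hw₁ hw₂ (F : Set (Sym2 V)) p rfl
    have hmono1 :
        (SimpleGraph.fromEdgeSet ((∅ ∪ F : Finset (Sym2 V)) : Set (Sym2 V))).Reachable v u →
        (SimpleGraph.fromEdgeSet ((insert e₁ ∅ ∪ F : Finset (Sym2 V)) :
          Set (Sym2 V))).Reachable v u := by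
      rw [hsetD, hset1]
      exact fun h => h.mono (SimpleGraph.fromEdgeSet_mono (Set.subset_insert _ _))
    have hmono2 :
        (SimpleGraph.fromEdgeSet ((∅ ∪ F : Finset (Sym2 V)) : Set (Sym2 V))).Reachable v u →
        (SimpleGraph.fromEdgeSet ((insert e₂ ∅ ∪ F : Finset (Sym2 V)) :
          Set (Sym2 V))).Reachable v u := by
      rw [hsetD, hset2]
      exact fun h => h.mono (SimpleGraph.fromEdgeSet_mono (Set.subset_insert _ _))
    split_ifs <;> simp_all <;> nlinarith
  nlinarith [mul_nonneg (sub_nonneg.2 hDB) (sub_nonneg.2 hDC), sq_nonneg α,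
    mul_le_mul_of_nonneg_right hACBD hD0,
    mul_nonneg (mul_nonneg hα0 hα0) (sub_nonneg.2 (mul_le_mul_of_nonneg_right hACBD hD0)),
    mul_nonneg (mul_nonneg hα0 hα0) (mul_nonneg (sub_nonneg.2 hDB) (sub_nonneg.2 hDC))]
end

section
/- Monotonicity and submodularity of g_v: Let G = (V, E, α) be an information graph, let u, v ∈ V, and let E^u = {uw : w ∈ V, uw ∉ E} be the set of potential new edges incident to u. Define g_v : 2^{E^u} → ℝ by g_v(S) = log prox_{G+S}(v, u). Then g_v is monotone (S ⊆ T implies g_v(S) ≤ g_v(T)) and submodular: for all S ⊆ T ⊆ E^u and all e ∈ E^u, g_v(T ∪ {e}) − g_v(T) ≤ g_v(S ∪ {e}) − g_v(S); equivalently, prox_{G+T+e}(v, u) · prox_{G+S}(v, u) ≤ prox_{G+S+e}(v, u) · prox_{G+T}(v, u). (For the logarithmic form, assume G is connected and α > 0 so that all proximities are positive.) -/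
open scoped Classical

variable {V : Type*} [Fintype V] [DecidableEq V]

set_option linter.unusedSectionVars false

lemma sum_weights (α : ℝ) (A : Finset (Sym2 V)) :
    ∑ G ∈ A.powerset, α ^ G.card * (1 - α) ^ (A \ G).card = 1 := by
  have h := Finset.prod_add (fun _ : Sym2 V => α) (fun _ : Sym2 V => (1 - α)) A
  simp only [Finset.prod_const] at h
  rw [← h]
  simp

lemma reach_union_star (u v : V) (F G : Finset (Sym2 V))
    (hG : ∀ e ∈ G, ∃ w, w ≠ u ∧ e = s(u, w)) :
    (SimpleGraph.fromEdgeSet ((↑(F ∪ G)) : Set (Sym2 V))).Reachable v u ↔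
      ((SimpleGraph.fromEdgeSet ((↑F) : Set (Sym2 V))).Reachable v u ∨
        ∃ w, w ≠ u ∧ s(u, w) ∈ G ∧
          (SimpleGraph.fromEdgeSet ((↑F) : Set (Sym2 V))).Reachable v w) := by
  have hmono : SimpleGraph.fromEdgeSet ((↑F) : Set (Sym2 V)) ≤
      SimpleGraph.fromEdgeSet ((↑(F ∪ G)) : Set (Sym2 V)) := by
    apply SimpleGraph.fromEdgeSet_mono
    simp [Finset.coe_union]
  constructor
  · rintro ⟨p⟩
    have main : ∀ (x y : V) (_ : (SimpleGraph.fromEdgeSet ((↑(F ∪ G)) : Set (Sym2 V))).Walk x y),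
        y = u → ((SimpleGraph.fromEdgeSet ((↑F) : Set (Sym2 V))).Reachable x u ∨
          ∃ w, w ≠ u ∧ s(u, w) ∈ G ∧
            (SimpleGraph.fromEdgeSet ((↑F) : Set (Sym2 V))).Reachable x w) := by
      intro x y q
      induction q with
      | nil => rintro rfl; exact Or.inl (SimpleGraph.Reachable.refl _)
      | @cons a b c hab q ih =>
        rintro rfl
        rw [SimpleGraph.fromEdgeSet_adj] at hab
        obtain ⟨hmem, hne⟩ := hab
        rw [Finset.coe_union, Set.mem_union] at hmem
        rcases hmem with hF | hGm
        · have hadj : (SimpleGraph.fromEdgeSet ((↑F) : Set (Sym2 V))).Adj a b :=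
            (SimpleGraph.fromEdgeSet_adj _).2 ⟨hF, hne⟩
          rcases ih rfl with h | ⟨w, hw, hwG, hr⟩
          · exact Or.inl (hadj.reachable.trans h)
          · exact Or.inr ⟨w, hw, hwG, hadj.reachable.trans hr⟩
        · obtain ⟨w, hwu, hee⟩ := hG _ hGm
          rw [Sym2.eq_iff] at hee
          rcases hee with ⟨rfl, rfl⟩ | ⟨rfl, rfl⟩
          · exact Or.inl (SimpleGraph.Reachable.refl _)
          · refine Or.inr ⟨a, hwu, ?_, SimpleGraph.Reachable.refl _⟩
            rw [Sym2.eq_swap]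
            exact_mod_cast hGm
    exact main v u p rfl
  · rintro (h | ⟨w, hwu, hwG, hr⟩)
    · exact h.mono hmono
    · refine (hr.mono hmono).trans ?_
      have : (SimpleGraph.fromEdgeSet ((↑(F ∪ G)) : Set (Sym2 V))).Adj w u := by
        rw [SimpleGraph.fromEdgeSet_adj]
        constructor
        · simp only [Finset.coe_union, Set.mem_union, Finset.mem_coe]
          right
          rw [Sym2.eq_swap]
          exact hwG
        · exact hwu
      exact this.reachable

noncomputable def Dset (u v : V) (F S : Finset (Sym2 V)) : Finset (Sym2 V) :=
  S.filter (fun e => ∃ w, w ≠ u ∧ e = s(u, w) ∧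
    (SimpleGraph.fromEdgeSet ((↑F) : Set (Sym2 V))).Reachable v w)


noncomputable def qq (α : ℝ) (c : Prop) (n : ℕ) : ℝ := if c then 1 else 1 - (1 - α) ^ n

noncomputable def qval (α : ℝ) (u v : V) (F S : Finset (Sym2 V)) : ℝ :=
  qq α ((SimpleGraph.fromEdgeSet ((↑F) : Set (Sym2 V))).Reachable v u) (Dset u v F S).card

lemma prox_factor (E : Finset (Sym2 V)) (α : ℝ) (u v : V) (S : Finset (Sym2 V))
    (hSE : ∀ e ∈ S, e ∉ E) (hSstar : ∀ e ∈ S, ∃ w, w ≠ u ∧ e = s(u, w)) :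
    prox (E ∪ S) α v u =
      ∑ F ∈ E.powerset, α ^ F.card * (1 - α) ^ (E \ F).card * qval α u v F S := by
  have hdisj : Disjoint E S := Finset.disjoint_left.2 fun a ha hb => hSE a hb ha
  unfold prox
  rw [Finset.sum_nbij' (i := fun H => (H ∩ E, H ∩ S)) (j := fun x => x.1 ∪ x.2)
    (t := E.powerset ×ˢ S.powerset)
    (g := fun x => if (SimpleGraph.fromEdgeSet ((↑(x.1 ∪ x.2)) : Set (Sym2 V))).Reachable v u then
      α ^ (x.1 ∪ x.2).card * (1 - α) ^ ((E ∪ S) \ (x.1 ∪ x.2)).card else 0)]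
  · rw [Finset.sum_product]
    refine Finset.sum_congr rfl fun F hF => ?_
    rw [Finset.mem_powerset] at hF
    have hGS : ∀ G ∈ S.powerset,
        (if (SimpleGraph.fromEdgeSet ((↑(F ∪ G)) : Set (Sym2 V))).Reachable v u then
          α ^ (F ∪ G).card * (1 - α) ^ ((E ∪ S) \ (F ∪ G)).card else 0) =
        α ^ F.card * (1 - α) ^ (E \ F).card *
          (if ((SimpleGraph.fromEdgeSet ((↑F) : Set (Sym2 V))).Reachable v u ∨
              ∃ w, w ≠ u ∧ s(u, w) ∈ G ∧
                (SimpleGraph.fromEdgeSet ((↑F) : Set (Sym2 V))).Reachable v w) then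
            α ^ G.card * (1 - α) ^ (S \ G).card else 0) := by
      intro G hG
      rw [Finset.mem_powerset] at hG
      have hdFG : Disjoint F G :=
        Finset.disjoint_of_subset_left hF (Finset.disjoint_of_subset_right hG hdisj)
      have hcard1 : (F ∪ G).card = F.card + G.card := Finset.card_union_of_disjoint hdFG
      have hset : (E ∪ S) \ (F ∪ G) = (E \ F) ∪ (S \ G) := by
        ext a
        simp only [Finset.mem_sdiff, Finset.mem_union, not_or]
        constructor
        · rintro ⟨hE | hS, hnF, hnG⟩
          · exact Or.inl ⟨hE, hnF⟩
          · exact Or.inr ⟨hS, hnG⟩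
        · rintro (⟨hE, hnF⟩ | ⟨hS, hnG⟩)
          · exact ⟨Or.inl hE, hnF, fun hg => Finset.disjoint_left.1 hdisj hE (hG hg)⟩
          · exact ⟨Or.inr hS, fun hf => Finset.disjoint_left.1 hdisj (hF hf) hS, hnG⟩
      have hcard2 : ((E ∪ S) \ (F ∪ G)).card = (E \ F).card + (S \ G).card := by
        rw [hset]
        exact Finset.card_union_of_disjoint (Finset.disjoint_of_subset_left
          (Finset.sdiff_subset) (Finset.disjoint_of_subset_right (Finset.sdiff_subset) hdisj))
      rw [hcard1, hcard2, pow_add, pow_add,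
        if_congr (reach_union_star u v F G (fun e he => hSstar e (hG he))) rfl rfl]
      split_ifs with h
      · ring
      · ring
    rw [Finset.sum_congr rfl hGS, ← Finset.mul_sum]
    congr 1
    unfold qval qq
    by_cases hA : (SimpleGraph.fromEdgeSet ((↑F) : Set (Sym2 V))).Reachable v u
    · rw [if_pos hA]
      have : ∀ G ∈ S.powerset,
          (if ((SimpleGraph.fromEdgeSet ((↑F) : Set (Sym2 V))).Reachable v u ∨
              ∃ w, w ≠ u ∧ s(u, w) ∈ G ∧
                (SimpleGraph.fromEdgeSet ((↑F) : Set (Sym2 V))).Reachable v w) then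
            α ^ G.card * (1 - α) ^ (S \ G).card else 0) =
          α ^ G.card * (1 - α) ^ (S \ G).card := fun G _ => if_pos (Or.inl hA)
      rw [Finset.sum_congr rfl this, sum_weights]
    · rw [if_neg hA]
      set D := Dset u v F S with hD
      have hDS : D ⊆ S := Finset.filter_subset _ _
      have hBiff : ∀ G ∈ S.powerset,
          (((SimpleGraph.fromEdgeSet ((↑F) : Set (Sym2 V))).Reachable v u ∨
              ∃ w, w ≠ u ∧ s(u, w) ∈ G ∧
                (SimpleGraph.fromEdgeSet ((↑F) : Set (Sym2 V))).Reachable v w)) ↔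
            ¬ (G ⊆ S \ D) := by
        intro G hG
        rw [Finset.mem_powerset] at hG
        constructor
        · rintro (h | ⟨w, hwu, hwG, hr⟩)
          · exact absurd h hA
          · intro hsub
            have := hsub hwG
            rw [Finset.mem_sdiff] at this
            exact this.2 (Finset.mem_filter.2 ⟨hG hwG, ⟨w, hwu, rfl, hr⟩⟩)
        · intro hsub
          right
          obtain ⟨e, heG, heNS⟩ := Finset.not_subset.1 hsub
          rw [Finset.mem_sdiff, not_and, not_not] at heNS
          have heD := heNS (hG heG)
          obtain ⟨-, w, hwu, rfl, hr⟩ := Finset.mem_filter.1 heD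
          exact ⟨w, hwu, heG, hr⟩
      have step1 : ∀ G ∈ S.powerset,
          (if ((SimpleGraph.fromEdgeSet ((↑F) : Set (Sym2 V))).Reachable v u ∨
              ∃ w, w ≠ u ∧ s(u, w) ∈ G ∧
                (SimpleGraph.fromEdgeSet ((↑F) : Set (Sym2 V))).Reachable v w) then
            α ^ G.card * (1 - α) ^ (S \ G).card else 0) =
          α ^ G.card * (1 - α) ^ (S \ G).card -
            (if G ⊆ S \ D then α ^ G.card * (1 - α) ^ (S \ G).card else 0) := by
        intro G hG
        rw [if_congr (hBiff G hG) rfl rfl]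
        by_cases hc : G ⊆ S \ D
        · rw [if_neg (not_not.2 hc), if_pos hc]; ring
        · rw [if_pos hc, if_neg hc]; ring
      rw [Finset.sum_congr rfl step1, Finset.sum_sub_distrib, sum_weights]
      have hfilter : S.powerset.filter (fun G => G ⊆ S \ D) = (S \ D).powerset := by
        ext G
        simp only [Finset.mem_filter, Finset.mem_powerset]
        exact ⟨fun h => h.2, fun h => ⟨h.trans (Finset.sdiff_subset), h⟩⟩
      rw [← Finset.sum_filter, hfilter]
      have step2 : ∀ G ∈ (S \ D).powerset,
          α ^ G.card * (1 - α) ^ (S \ G).card =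
          (1 - α) ^ D.card * (α ^ G.card * (1 - α) ^ ((S \ D) \ G).card) := by
        intro G hG
        rw [Finset.mem_powerset] at hG
        have hGS : G ⊆ S := hG.trans (Finset.sdiff_subset)
        have h1 : (S \ G).card = S.card - G.card := Finset.card_sdiff_of_subset hGS
        have h2 : ((S \ D) \ G).card = (S \ D).card - G.card := Finset.card_sdiff_of_subset hG
        have h3 : (S \ D).card = S.card - D.card := Finset.card_sdiff_of_subset hDS
        have h4 : G.card ≤ (S \ D).card := Finset.card_le_card hG
        have h5 : D.card ≤ S.card := Finset.card_le_card hDS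
        have h6 : (S \ G).card = ((S \ D) \ G).card + D.card := by omega
        rw [h6, pow_add]
        ring
      rw [Finset.sum_congr rfl step2, ← Finset.mul_sum, sum_weights, mul_one]
  · intro H hH
    simp only [Finset.mem_product, Finset.mem_powerset]
    exact ⟨Finset.inter_subset_right, Finset.inter_subset_right⟩
  · intro x hx
    simp only [Finset.mem_product, Finset.mem_powerset] at hx ⊢
    exact Finset.union_subset (hx.1.trans Finset.subset_union_left)
      (hx.2.trans Finset.subset_union_right)
  · intro H hH
    simp only [Finset.mem_powerset] at hH
    rw [← Finset.inter_union_distrib_left]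
    exact Finset.inter_eq_left.2 hH
  · intro x hx
    simp only [Finset.mem_product, Finset.mem_powerset] at hx
    have h1 : (x.1 ∪ x.2) ∩ E = x.1 := by
      ext a
      simp only [Finset.mem_inter, Finset.mem_union]
      constructor
      · rintro ⟨h | h, hE⟩
        · exact h
        · exact absurd hE (Finset.disjoint_right.1 hdisj (hx.2 h))
      · intro h
        exact ⟨Or.inl h, hx.1 h⟩
    have h2 : (x.1 ∪ x.2) ∩ S = x.2 := by
      ext a
      simp only [Finset.mem_inter, Finset.mem_union]
      constructor
      · rintro ⟨h | h, hS⟩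
        · exact absurd hS (Finset.disjoint_left.1 hdisj (hx.1 h))
        · exact h
      · intro h
        exact ⟨Or.inr h, hx.2 h⟩
    exact Prod.ext h1 h2
  · intro H hH
    simp only [Finset.mem_powerset] at hH
    have : H ∩ E ∪ H ∩ S = H := by
      rw [← Finset.inter_union_distrib_left]; exact Finset.inter_eq_left.2 hH
    rw [this]

lemma key_pair (α : ℝ) (hα0 : 0 ≤ α) (hα1 : α ≤ 1) (c c' : Prop) (s t s' t' d d' : ℕ)
    (hst : s ≤ t) (hst' : s' ≤ t') :
    qq α c (t + d) * qq α c' s' + qq α c' (t' + d') * qq α c s ≤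
      qq α c (s + d) * qq α c' t' + qq α c' (s' + d') * qq α c t := by
  have hβ0 : (0:ℝ) ≤ 1 - α := by linarith
  have hβ1 : (1:ℝ) - α ≤ 1 := by linarith
  have hb : (1 - α) ^ t ≤ (1 - α) ^ s := pow_le_pow_of_le_one hβ0 hβ1 hst
  have hb' : (1 - α) ^ t' ≤ (1 - α) ^ s' := pow_le_pow_of_le_one hβ0 hβ1 hst'
  have ha1 : (1 - α) ^ s ≤ 1 := pow_le_one₀ hβ0 hβ1
  have ha1' : (1 - α) ^ s' ≤ 1 := pow_le_one₀ hβ0 hβ1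
  have hg1 : (1 - α) ^ d ≤ 1 := pow_le_one₀ hβ0 hβ1
  have hg1' : (1 - α) ^ d' ≤ 1 := pow_le_one₀ hβ0 hβ1
  have hb0 : (0:ℝ) ≤ (1 - α) ^ t := pow_nonneg hβ0 t
  have hb0' : (0:ℝ) ≤ (1 - α) ^ t' := pow_nonneg hβ0 t'
  have hg0 : (0:ℝ) ≤ (1 - α) ^ d := pow_nonneg hβ0 d
  have hg0' : (0:ℝ) ≤ (1 - α) ^ d' := pow_nonneg hβ0 d'
  set a := (1 - α) ^ s
  set b := (1 - α) ^ t
  set a' := (1 - α) ^ s'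
  set b' := (1 - α) ^ t'
  set g := (1 - α) ^ d
  set g' := (1 - α) ^ d'
  have hsd : (1 - α) ^ (s + d) = a * g := pow_add _ _ _
  have htd : (1 - α) ^ (t + d) = b * g := pow_add _ _ _
  have hsd' : (1 - α) ^ (s' + d') = a' * g' := pow_add _ _ _
  have htd' : (1 - α) ^ (t' + d') = b' * g' := pow_add _ _ _
  have ha0 : (0:ℝ) ≤ a := pow_nonneg hβ0 s
  have ha0' : (0:ℝ) ≤ a' := pow_nonneg hβ0 s'
  -- corner inequalities
  have f00 : 0 ≤ (a - b) + (a' - b') := by linarith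
  have f01 : 0 ≤ a * (1 - b') - b * (1 - a') := by
    have : b * (1 - a') ≤ a * (1 - b') :=
      mul_le_mul hb (by linarith) (by linarith) ha0
    linarith
  have f10 : 0 ≤ a' * (1 - b) - b' * (1 - a) := by
    have : b' * (1 - a) ≤ a' * (1 - b) :=
      mul_le_mul hb' (by linarith) (by linarith) (by linarith)
    linarith
  by_cases hc : c <;> by_cases hc' : c' <;>
    simp only [qq, if_pos, if_neg, hc, hc', if_true, if_false, hsd, htd, hsd', htd']
  · linarith
  · nlinarith [mul_nonneg (sub_nonneg.2 hg1') (sub_nonneg.2 hb')]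
  · nlinarith [mul_nonneg (sub_nonneg.2 hg1) (sub_nonneg.2 hb)]
  · nlinarith [mul_nonneg (mul_nonneg (sub_nonneg.2 hg1) (sub_nonneg.2 hg1')) f00,
      mul_nonneg (mul_nonneg (sub_nonneg.2 hg1) hg0') f01,
      mul_nonneg (mul_nonneg hg0 (sub_nonneg.2 hg1')) f10]

lemma double_sum_le {ι : Type*} (P : Finset ι) (p : ι → ℝ) (hp : ∀ i ∈ P, 0 ≤ p i)
    (f1 f2 g1 g2 : ι → ℝ)
    (h : ∀ i ∈ P, ∀ j ∈ P, f1 i * f2 j + f1 j * f2 i ≤ g1 i * g2 j + g1 j * g2 i) :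
    (∑ i ∈ P, p i * f1 i) * (∑ i ∈ P, p i * f2 i) ≤
      (∑ i ∈ P, p i * g1 i) * (∑ i ∈ P, p i * g2 i) := by
  have e1 : ∀ f g : ι → ℝ,
      (∑ i ∈ P, p i * f i) * (∑ i ∈ P, p i * g i) +
        (∑ i ∈ P, p i * g i) * (∑ i ∈ P, p i * f i) =
      ∑ i ∈ P, ∑ j ∈ P, (p i * p j) * (f i * g j + f j * g i) := by
    intro f g
    have base : (∑ i ∈ P, p i * f i) * (∑ i ∈ P, p i * g i) =
        ∑ i ∈ P, ∑ j ∈ P, (p i * p j) * (f i * g j) := by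
      rw [Finset.sum_mul_sum]
      exact Finset.sum_congr rfl fun i _ => Finset.sum_congr rfl fun j _ => by ring
    have swap : (∑ i ∈ P, ∑ j ∈ P, (p i * p j) * (f j * g i)) =
        ∑ i ∈ P, ∑ j ∈ P, (p i * p j) * (f i * g j) := by
      rw [Finset.sum_comm]
      exact Finset.sum_congr rfl fun i _ => Finset.sum_congr rfl fun j _ => by ring
    have combine : (∑ i ∈ P, ∑ j ∈ P, (p i * p j) * (f i * g j + f j * g i)) =
        (∑ i ∈ P, ∑ j ∈ P, (p i * p j) * (f i * g j)) +
          ∑ i ∈ P, ∑ j ∈ P, (p i * p j) * (f j * g i) := by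
      rw [← Finset.sum_add_distrib]
      exact Finset.sum_congr rfl fun i _ => by
        rw [← Finset.sum_add_distrib]
        exact Finset.sum_congr rfl fun j _ => by ring
    have comm : (∑ i ∈ P, p i * g i) * (∑ i ∈ P, p i * f i) =
        (∑ i ∈ P, p i * f i) * (∑ i ∈ P, p i * g i) := mul_comm _ _
    linarith
  have h2 : ∑ i ∈ P, ∑ j ∈ P, (p i * p j) * (f1 i * f2 j + f1 j * f2 i) ≤
      ∑ i ∈ P, ∑ j ∈ P, (p i * p j) * (g1 i * g2 j + g1 j * g2 i) := by
    refine Finset.sum_le_sum fun i hi => Finset.sum_le_sum fun j hj => ?_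
    exact mul_le_mul_of_nonneg_left (h i hi j hj) (mul_nonneg (hp i hi) (hp j hj))
  have hA := e1 f1 f2
  have hB := e1 g1 g2
  have hc1 : (∑ i ∈ P, p i * f2 i) * (∑ i ∈ P, p i * f1 i) =
      (∑ i ∈ P, p i * f1 i) * (∑ i ∈ P, p i * f2 i) := mul_comm _ _
  have hc2 : (∑ i ∈ P, p i * g2 i) * (∑ i ∈ P, p i * g1 i) =
      (∑ i ∈ P, p i * g1 i) * (∑ i ∈ P, p i * g2 i) := mul_comm _ _
  linarith

lemma prox_pos {E' : Finset (Sym2 V)} {α : ℝ} (hα0 : 0 < α) (hα1 : α ≤ 1) {u v : V}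
    (h : (SimpleGraph.fromEdgeSet ((↑E') : Set (Sym2 V))).Reachable u v) :
    0 < prox E' α u v := by
  have hβ : (0:ℝ) ≤ 1 - α := by linarith
  unfold prox
  apply Finset.sum_pos'
  · intro F hF
    split_ifs
    · positivity
    · exact le_refl 0
  · refine ⟨E', Finset.mem_powerset_self E', ?_⟩
    rw [if_pos h, Finset.sdiff_self, Finset.card_empty, pow_zero, mul_one]
    exact pow_pos hα0 _

lemma qval_nonneg {α : ℝ} (hα0 : 0 ≤ α) (hα1 : α ≤ 1) (u v : V) (F S : Finset (Sym2 V)) :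
    0 ≤ qval α u v F S := by
  have hβ0 : (0:ℝ) ≤ 1 - α := by linarith
  unfold qval qq
  split_ifs
  · norm_num
  · have := pow_le_one₀ hβ0 (by linarith : (1:ℝ) - α ≤ 1) (n := (Dset u v F S).card)
    linarith

lemma prox_mono_star (E : Finset (Sym2 V)) {α : ℝ} (hα0 : 0 ≤ α) (hα1 : α ≤ 1) (u v : V)
    {S T : Finset (Sym2 V)} (hT : ∀ e ∈ T, e ∉ E ∧ ∃ w : V, w ≠ u ∧ e = s(u, w))
    (hST : S ⊆ T) : prox (E ∪ S) α v u ≤ prox (E ∪ T) α v u := by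
  have hβ0 : (0:ℝ) ≤ 1 - α := by linarith
  rw [prox_factor E α u v S (fun e he => (hT e (hST he)).1) (fun e he => (hT e (hST he)).2),
    prox_factor E α u v T (fun e he => (hT e he).1) (fun e he => (hT e he).2)]
  refine Finset.sum_le_sum fun F hF => ?_
  refine mul_le_mul_of_nonneg_left ?_ (by positivity)
  unfold qval qq
  split_ifs
  · exact le_refl 1
  · have hsub : Dset u v F S ⊆ Dset u v F T := Finset.filter_subset_filter _ hST
    have := pow_le_pow_of_le_one hβ0 (by linarith : (1:ℝ) - α ≤ 1)
      (Finset.card_le_card hsub)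
    linarith

lemma Dset_card_insert (u v : V) (F S : Finset (Sym2 V)) (e : Sym2 V) (he : e ∉ S) :
    (Dset u v F (insert e S)).card = (Dset u v F S).card +
      (if (∃ w, w ≠ u ∧ e = s(u, w) ∧
          (SimpleGraph.fromEdgeSet ((↑F) : Set (Sym2 V))).Reachable v w) then 1 else 0) := by
  unfold Dset
  rw [Finset.filter_insert]
  split_ifs
  · rw [Finset.card_insert_of_notMem (fun hm => he (Finset.mem_filter.1 hm).1)]
  · omega


/-- monotonicity and submodularity of
`g_v(S) = log prox_{G+S}(v, u)` over sets of new edges incident to `u`. -/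
theorem gv_monotone_submodular
    (E : Finset (Sym2 V)) (α : ℝ) (hα0 : 0 < α) (hα1 : α ≤ 1)
    (hconn : (SimpleGraph.fromEdgeSet (E : Set (Sym2 V))).Connected)
    (u v : V) :
    (∀ S T : Finset (Sym2 V),
      (∀ e ∈ T, e ∉ E ∧ ∃ w : V, w ≠ u ∧ e = s(u, w)) → S ⊆ T →
      Real.log (prox (E ∪ S) α v u) ≤ Real.log (prox (E ∪ T) α v u)) ∧
    (∀ (S T : Finset (Sym2 V)) (e : Sym2 V),
      (∀ e' ∈ T, e' ∉ E ∧ ∃ w : V, w ≠ u ∧ e' = s(u, w)) → S ⊆ T →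
      (e ∉ E ∧ ∃ w : V, w ≠ u ∧ e = s(u, w)) →
      (Real.log (prox (E ∪ insert e T) α v u) - Real.log (prox (E ∪ T) α v u) ≤
        Real.log (prox (E ∪ insert e S) α v u) - Real.log (prox (E ∪ S) α v u)) ∧
      prox (E ∪ insert e T) α v u * prox (E ∪ S) α v u ≤
        prox (E ∪ insert e S) α v u * prox (E ∪ T) α v u) := by
  have hreach : ∀ S : Finset (Sym2 V),
      (SimpleGraph.fromEdgeSet ((↑(E ∪ S)) : Set (Sym2 V))).Reachable v u := by
    intro S
    refine (hconn.preconnected v u).mono (SimpleGraph.fromEdgeSet_mono ?_)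
    rw [Finset.coe_union]
    exact Set.subset_union_left
  have hpos : ∀ S : Finset (Sym2 V), 0 < prox (E ∪ S) α v u := fun S =>
    prox_pos hα0 hα1 (hreach S)
  constructor
  · intro S T hT hST
    exact (Real.log_le_log_iff (hpos S) (hpos T)).2 (prox_mono_star E hα0.le hα1 u v hT hST)
  · intro S T e hT hST he
    have hinsS : ∀ e' ∈ insert e S, e' ∉ E ∧ ∃ w : V, w ≠ u ∧ e' = s(u, w) := by
      intro e' h
      rcases Finset.mem_insert.1 h with rfl | h
      · exact he
      · exact hT e' (hST h)
    have hinsT : ∀ e' ∈ insert e T, e' ∉ E ∧ ∃ w : V, w ≠ u ∧ e' = s(u, w) := by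
      intro e' h
      rcases Finset.mem_insert.1 h with rfl | h
      · exact he
      · exact hT e' h
    have hprod : prox (E ∪ insert e T) α v u * prox (E ∪ S) α v u ≤
        prox (E ∪ insert e S) α v u * prox (E ∪ T) α v u := by
      by_cases heT : e ∈ T
      · by_cases heS : e ∈ S
        · rw [Finset.insert_eq_self.2 heS, Finset.insert_eq_self.2 heT]
          exact le_of_eq (mul_comm _ _)
        · rw [Finset.insert_eq_self.2 heT]
          have h1 : prox (E ∪ S) α v u ≤ prox (E ∪ insert e S) α v u :=
            prox_mono_star E hα0.le hα1 u v hinsS (Finset.subset_insert e S)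
          nlinarith [hpos T, hpos S, hpos (insert e S)]
      · have heS : e ∉ S := fun h => heT (hST h)
        rw [prox_factor E α u v (insert e T) (fun e' h => (hinsT e' h).1)
            (fun e' h => (hinsT e' h).2),
          prox_factor E α u v (insert e S) (fun e' h => (hinsS e' h).1)
            (fun e' h => (hinsS e' h).2),
          prox_factor E α u v T (fun e' h => (hT e' h).1) (fun e' h => (hT e' h).2),
          prox_factor E α u v S (fun e' h => (hT e' (hST h)).1)
            (fun e' h => (hT e' (hST h)).2)]
        have hβ : (0:ℝ) ≤ 1 - α := by linarith
        refine double_sum_le E.powerset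
          (fun F => α ^ F.card * (1 - α) ^ (E \ F).card)
          (fun F _ => by positivity)
          (fun F => qval α u v F (insert e T)) (fun F => qval α u v F S)
          (fun F => qval α u v F (insert e S)) (fun F => qval α u v F T) ?_
        intro F hF F' hF'
        have hqS : ∀ F₀ : Finset (Sym2 V), qval α u v F₀ (insert e S) =
            qq α ((SimpleGraph.fromEdgeSet ((↑F₀) : Set (Sym2 V))).Reachable v u)
              ((Dset u v F₀ S).card + (if (∃ w, w ≠ u ∧ e = s(u, w) ∧
                (SimpleGraph.fromEdgeSet ((↑F₀) : Set (Sym2 V))).Reachable v w) then 1 else 0)) := by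
          intro F₀
          show qq α _ (Dset u v F₀ (insert e S)).card = _
          rw [Dset_card_insert u v F₀ S e heS]
        have hqT : ∀ F₀ : Finset (Sym2 V), qval α u v F₀ (insert e T) =
            qq α ((SimpleGraph.fromEdgeSet ((↑F₀) : Set (Sym2 V))).Reachable v u)
              ((Dset u v F₀ T).card + (if (∃ w, w ≠ u ∧ e = s(u, w) ∧
                (SimpleGraph.fromEdgeSet ((↑F₀) : Set (Sym2 V))).Reachable v w) then 1 else 0)) := by
          intro F₀
          show qq α _ (Dset u v F₀ (insert e T)).card = _
          rw [Dset_card_insert u v F₀ T e heT]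
        have hq : ∀ (F₀ S₀ : Finset (Sym2 V)), qval α u v F₀ S₀ =
            qq α ((SimpleGraph.fromEdgeSet ((↑F₀) : Set (Sym2 V))).Reachable v u)
              (Dset u v F₀ S₀).card := fun _ _ => rfl
        beta_reduce
        rw [hqT F, hqT F', hqS F, hqS F', hq F S, hq F' S, hq F T, hq F' T]
        exact key_pair α hα0.le hα1 _ _ _ _ _ _ _ _
          (Finset.card_le_card (Finset.filter_subset_filter _ hST))
          (Finset.card_le_card (Finset.filter_subset_filter _ hST))
    refine ⟨?_, hprod⟩
    have hlog := (Real.log_le_log_iff (mul_pos (hpos (insert e T)) (hpos S))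
      (mul_pos (hpos (insert e S)) (hpos T))).2 hprod
    rw [Real.log_mul (ne_of_gt (hpos (insert e T))) (ne_of_gt (hpos S)),
      Real.log_mul (ne_of_gt (hpos (insert e S))) (ne_of_gt (hpos T))] at hlog
    linarith
end

section
/- Low-probability path bound: Let H = (V_H, E_H, δ) be an information graph on n_H vertices in which every edge is retained independently with probability δ, where 0 ≤ δ < 1/(2 n_H). Let u, v ∈ V_H be vertices whose graph distance in H is exactly c, for some integer c ≥ 1. Then prox_H(u, v) ≤ 2 n_H^{c−1} δ^c. -/
open scoped Classical

variable {V : Type*} [Fintype V] [DecidableEq V]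

lemma sum_superset (E S : Finset (Sym2 V)) (hS : S ⊆ E) (δ : ℝ) :
    ∑ F ∈ E.powerset.filter (fun F => S ⊆ F), δ ^ F.card * (1 - δ) ^ (E \ F).card
      = δ ^ S.card := by
  classical
  have key : ∀ F ∈ E.powerset.filter (fun F => S ⊆ F),
      δ ^ F.card * (1 - δ) ^ (E \ F).card
        = δ ^ S.card * (δ ^ (F \ S).card * (1 - δ) ^ ((E \ S) \ (F \ S)).card) := by
    intro F hF
    simp only [Finset.mem_filter, Finset.mem_powerset] at hF
    obtain ⟨hFE, hSF⟩ := hF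
    have h1 : (F \ S).card + S.card = F.card := Finset.card_sdiff_add_card_eq_card hSF
    have h2 : E \ F = (E \ S) \ (F \ S) := by
      ext a
      simp only [Finset.mem_sdiff]
      constructor
      · intro ⟨ha, hb⟩; exact ⟨⟨ha, fun hs => hb (hSF hs)⟩, fun hx => hb hx.1⟩
      · intro ⟨⟨ha, hs⟩, hb⟩
        refine ⟨ha, fun hf => hs ?_⟩
        by_contra hns
        exact hb ⟨hf, hns⟩
    rw [← h1, pow_add, h2]; ring
  rw [Finset.sum_congr rfl key, ← Finset.mul_sum]
  have reind : ∑ F ∈ E.powerset.filter (fun F => S ⊆ F),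
      (δ ^ (F \ S).card * (1 - δ) ^ ((E \ S) \ (F \ S)).card)
      = ∑ t ∈ (E \ S).powerset, δ ^ t.card * (1 - δ) ^ ((E \ S) \ t).card := by
    apply Finset.sum_nbij' (i := fun F => F \ S) (j := fun t => t ∪ S)
    · intro F hF
      simp only [Finset.mem_filter, Finset.mem_powerset] at hF ⊢
      exact Finset.sdiff_subset_sdiff hF.1 (le_refl S)
    · intro t ht
      simp only [Finset.mem_powerset] at ht
      simp only [Finset.mem_filter, Finset.mem_powerset]
      constructor
      · exact Finset.union_subset (ht.trans Finset.sdiff_subset) hS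
      · exact Finset.subset_union_right
    · intro F hF
      simp only [Finset.mem_filter, Finset.mem_powerset] at hF
      exact Finset.sdiff_union_of_subset hF.2
    · intro t ht
      simp only [Finset.mem_powerset] at ht
      apply Finset.union_sdiff_cancel_right
      exact Finset.disjoint_of_subset_left ht Finset.sdiff_disjoint
    · intro F hF; rfl
  rw [reind]
  have := Finset.prod_add (fun _ : Sym2 V => δ) (fun _ : Sym2 V => (1 - δ)) (E \ S)
  simp only [add_sub_cancel, Finset.prod_const_one, Finset.prod_const] at this
  rw [← this, mul_one]

lemma card_lists_le (L : Finset (List V)) (u v : V) (k : ℕ) (hk : 1 ≤ k)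
    (hL : ∀ l ∈ L, l.length = k + 1 ∧ l.head? = some u ∧ l.getLast? = some v) :
    L.card ≤ Fintype.card V ^ (k - 1) := by
  classical
  have h := Finset.card_le_card_of_injOn (s := L)
    (f := fun (l : List V) (i : Fin (k - 1)) => l.getD (i.1 + 1) u)
    (t := (Finset.univ : Finset (Fin (k - 1) → V)))
    (fun _ _ => Finset.mem_univ _) ?_
  · simpa [Finset.card_univ] using h
  · intro l1 h1 l2 h2 hφ
    obtain ⟨hlen1, hh1, hg1⟩ := hL l1 h1
    obtain ⟨hlen2, hh2, hg2⟩ := hL l2 h2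
    have hne1 : l1 ≠ [] := by intro h; simp [h] at hlen1
    have hne2 : l2 ≠ [] := by intro h; simp [h] at hlen2
    apply List.ext_getElem (by rw [hlen1, hlen2])
    intro i hi1 hi2
    rcases Nat.eq_zero_or_pos i with h0 | hpos
    · subst h0
      rw [List.getElem_zero, List.getElem_zero]
      have e1 := List.head?_eq_head (l := l1) hne1
      have e2 := List.head?_eq_head (l := l2) hne2
      rw [e1] at hh1; rw [e2] at hh2
      rw [Option.some.injEq] at hh1 hh2
      rw [hh1, hh2]
    · rcases eq_or_lt_of_le (Nat.lt_succ_iff.mp (hlen1 ▸ hi1)) with hik | hik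
      · subst hik
        have e1 : l1[i] = l1.getLast hne1 := by
          rw [List.getLast_eq_getElem]; congr 1; omega
        have e2 : l2[i] = l2.getLast hne2 := by
          rw [List.getLast_eq_getElem]; congr 1; omega
        rw [e1, e2]
        rw [List.getLast?_eq_getLast hne1] at hg1
        rw [List.getLast?_eq_getLast hne2] at hg2
        rw [Option.some.injEq] at hg1 hg2
        rw [hg1, hg2]
      · have := congrFun hφ ⟨i - 1, by omega⟩
        simp only at this
        have hi1' : i - 1 + 1 = i := by omega
        rw [hi1'] at this
        rwa [List.getD_eq_getElem _ _ (by omega), List.getD_eq_getElem _ _ (by omega)] at this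

lemma geom_bound (r : ℝ) (h0 : 0 ≤ r) (h1 : r ≤ 1/2) (m : ℕ) :
    ∑ j ∈ Finset.range m, r ^ j ≤ 2 := by
  calc ∑ j ∈ Finset.range m, r ^ j ≤ ∑ j ∈ Finset.range m, (1/2 : ℝ) ^ j :=
        Finset.sum_le_sum fun j _ => pow_le_pow_left₀ h0 h1 j
    _ ≤ 2 := by
        rw [geom_sum_eq (by norm_num : (1/2:ℝ) ≠ 1) m]
        have h2 : (0:ℝ) ≤ (1/2:ℝ)^m := by positivity
        rw [div_le_iff_of_neg (by norm_num : (1/2:ℝ) - 1 < 0)]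
        nlinarith


omit [Fintype V] [DecidableEq V] in
lemma walk_edges_eq_zip {G : SimpleGraph V} {u v : V} (p : G.Walk u v) :
    p.edges = (p.support.zip p.support.tail).map (fun x => s(x.1, x.2)) := by
  induction p with
  | nil => rfl
  | @cons a b c h q ih =>
    rw [SimpleGraph.Walk.edges_cons, SimpleGraph.Walk.support_cons]
    conv_rhs => rw [q.support_eq_cons]
    simp only [List.tail_cons, List.zip_cons_cons, List.map_cons]
    rw [← q.support_eq_cons, ih]


/-- low-probability path bound. -/
theorem low_probability_path_bound
    (E : Finset (Sym2 V)) (δ : ℝ) (hδ0 : 0 ≤ δ)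
    (hδ : δ < 1 / (2 * (Fintype.card V : ℝ)))
    (u v : V) (c : ℕ) (hc : 1 ≤ c)
    (hdist : (SimpleGraph.fromEdgeSet (E : Set (Sym2 V))).dist u v = c) :
    prox E δ u v ≤ 2 * (Fintype.card V : ℝ) ^ (c - 1) * δ ^ c := by
  classical
  have hV : Nonempty V := ⟨u⟩
  set n := Fintype.card V with hn
  have hn1 : 1 ≤ n := Fintype.card_pos
  have hnpos : (0:ℝ) < n := by exact_mod_cast hn1
  have hr : (n:ℝ) * δ ≤ 1/2 := by
    have := (lt_div_iff₀ (by positivity : (0:ℝ) < 2 * n)).mp hδ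
    nlinarith
  have hδ1 : δ ≤ 1 := by
    have h1 : (1:ℝ) * δ ≤ (n:ℝ) * δ :=
      mul_le_mul_of_nonneg_right (by exact_mod_cast hn1) hδ0
    linarith
  have hw : ∀ F : Finset (Sym2 V), 0 ≤ δ ^ F.card * (1 - δ) ^ (E \ F).card :=
    fun F => mul_nonneg (pow_nonneg hδ0 _) (pow_nonneg (by linarith) _)
  set T := E.powerset.filter
    (fun (F : Finset (Sym2 V)) =>
      (SimpleGraph.fromEdgeSet (F : Set (Sym2 V))).Reachable u v) with hT
  set g : Finset (Sym2 V) → List V := fun (F : Finset (Sym2 V)) =>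
    if h : (SimpleGraph.fromEdgeSet ((F : Finset (Sym2 V)) : Set (Sym2 V))).Reachable u v
    then (Classical.choice h).bypass.support else [] with hg
  set eOf : List V → Finset (Sym2 V) :=
    fun l => ((l.zip l.tail).map fun x => s(x.1, x.2)).toFinset with heOf
  have hfacts : ∀ F ∈ T, (c + 1 ≤ (g F).length ∧ (g F).length ≤ n ∧
      (g F).head? = some u ∧ (g F).getLast? = some v) ∧
      (eOf (g F) ⊆ F ∧ (eOf (g F)).card = (g F).length - 1) := by
    intro F hF
    rw [hT, Finset.mem_filter, Finset.mem_powerset] at hF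
    obtain ⟨hFE, hre⟩ := hF
    set p := (Classical.choice hre).bypass with hp
    have hgF : g F = p.support := by rw [hg]; simp only; rw [dif_pos hre]
    have hpath : p.IsPath := SimpleGraph.Walk.bypass_isPath _
    have hsup : p.support.length = p.length + 1 := SimpleGraph.Walk.length_support p
    have hlb : c ≤ p.length := by
      have hmono : SimpleGraph.fromEdgeSet (F : Set (Sym2 V)) ≤
          SimpleGraph.fromEdgeSet (E : Set (Sym2 V)) :=
        SimpleGraph.fromEdgeSet_mono (Finset.coe_subset.mpr hFE)
      have := SimpleGraph.dist_le (p.mapLe hmono)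
      rw [hdist] at this
      simpa [SimpleGraph.Walk.mapLe] using this
    have hub : p.support.length ≤ n := List.Nodup.length_le_card hpath.support_nodup
    have hedges : p.edges.toFinset ⊆ F := by
      intro e he
      rw [List.mem_toFinset] at he
      have := SimpleGraph.Walk.edges_subset_edgeSet p he
      rw [SimpleGraph.edgeSet_fromEdgeSet] at this
      exact this.1
    have hecard : p.edges.toFinset.card = p.length := by
      rw [List.toFinset_card_of_nodup hpath.isTrail.edges_nodup,
        SimpleGraph.Walk.length_edges]
    have heOfg : eOf (g F) = p.edges.toFinset := by
      rw [hgF, heOf]; simp only; rw [← walk_edges_eq_zip]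
    refine ⟨⟨?_, ?_, ?_, ?_⟩, ?_, ?_⟩
    · rw [hgF, hsup]; omega
    · rw [hgF]; exact hub
    · rw [hgF, List.head?_eq_head (SimpleGraph.Walk.support_ne_nil p),
        SimpleGraph.Walk.head_support]
    · rw [hgF, List.getLast?_eq_getLast (SimpleGraph.Walk.support_ne_nil p),
        SimpleGraph.Walk.getLast_support]
    · rw [heOfg]; exact hedges
    · rw [heOfg, hgF, hecard, hsup]; omega
  set L := T.image g with hL
  have step1 : prox E δ u v = ∑ F ∈ T, δ ^ F.card * (1 - δ) ^ (E \ F).card := by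
    rw [prox, hT, Finset.sum_filter]
  have step2 : ∑ F ∈ T, δ ^ F.card * (1 - δ) ^ (E \ F).card
      = ∑ l ∈ L, ∑ F ∈ T.filter (fun F => g F = l), δ ^ F.card * (1 - δ) ^ (E \ F).card :=
    (Finset.sum_fiberwise_of_maps_to (fun F hF => Finset.mem_image_of_mem g hF) _).symm
  have step3 : ∀ l ∈ L, ∑ F ∈ T.filter (fun F => g F = l),
      δ ^ F.card * (1 - δ) ^ (E \ F).card ≤ δ ^ (l.length - 1) := by
    intro l hl
    obtain ⟨F0, hF0, hgF0⟩ := Finset.mem_image.mp hl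
    have hSE : eOf l ⊆ E := by
      rw [← hgF0]
      refine ((hfacts F0 hF0).2.1).trans ?_
      rw [hT, Finset.mem_filter, Finset.mem_powerset] at hF0
      exact hF0.1
    have hScard : (eOf l).card = l.length - 1 := by
      rw [← hgF0]; exact (hfacts F0 hF0).2.2
    calc ∑ F ∈ T.filter (fun F => g F = l), δ ^ F.card * (1 - δ) ^ (E \ F).card
        ≤ ∑ F ∈ E.powerset.filter (fun F => eOf l ⊆ F),
            δ ^ F.card * (1 - δ) ^ (E \ F).card := by
          apply Finset.sum_le_sum_of_subset_of_nonneg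
          · intro F hF
            rw [Finset.mem_filter] at hF ⊢
            obtain ⟨hFT, hgFl⟩ := hF
            have h1 := (hfacts F hFT).2.1
            rw [hgFl] at h1
            rw [hT, Finset.mem_filter] at hFT
            exact ⟨hFT.1, h1⟩
          · intro F _ _; exact hw F
      _ = δ ^ (eOf l).card := sum_superset E (eOf l) hSE δ
      _ = δ ^ (l.length - 1) := by rw [hScard]
  have hLfacts : ∀ l ∈ L, c + 1 ≤ l.length ∧ l.length ≤ n ∧
      l.head? = some u ∧ l.getLast? = some v := by
    intro l hl
    obtain ⟨F0, hF0, hgF0⟩ := Finset.mem_image.mp hl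
    rw [← hgF0]; exact (hfacts F0 hF0).1
  have step4 : ∑ l ∈ L, δ ^ (l.length - 1)
      ≤ ∑ k ∈ Finset.Icc c (n - 1), (n : ℝ) ^ (k - 1) * δ ^ k := by
    have hmaps : ∀ l ∈ L, l.length - 1 ∈ Finset.Icc c (n - 1) := by
      intro l hl
      obtain ⟨h1, h2, _, _⟩ := hLfacts l hl
      rw [Finset.mem_Icc]; omega
    rw [← Finset.sum_fiberwise_of_maps_to hmaps (fun l => δ ^ (l.length - 1))]
    apply Finset.sum_le_sum
    intro k hk
    rw [Finset.mem_Icc] at hk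
    have hfib : ∀ l ∈ L.filter (fun l => l.length - 1 = k), δ ^ (l.length - 1) = δ ^ k := by
      intro l hl
      rw [Finset.mem_filter] at hl
      rw [hl.2]
    rw [Finset.sum_congr rfl hfib, Finset.sum_const, nsmul_eq_mul]
    have hcard : (L.filter (fun l => l.length - 1 = k)).card ≤ n ^ (k - 1) := by
      apply card_lists_le _ u v k (le_trans hc hk.1)
      intro l hl
      rw [Finset.mem_filter] at hl
      obtain ⟨h1, h2, h3, h4⟩ := hLfacts l hl.1
      exact ⟨by omega, h3, h4⟩
    have := (Nat.cast_le (α := ℝ)).mpr hcard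
    rw [Nat.cast_pow] at this
    exact mul_le_mul_of_nonneg_right this (by positivity)
  have step5 : ∑ k ∈ Finset.Icc c (n - 1), (n : ℝ) ^ (k - 1) * δ ^ k
      ≤ 2 * (n : ℝ) ^ (c - 1) * δ ^ c := by
    set r := (n : ℝ) * δ with hrdef
    have hr0 : 0 ≤ r := by positivity
    have hterm : ∀ k ∈ Finset.Icc c (n - 1),
        (n : ℝ) ^ (k - 1) * δ ^ k = (n : ℝ) ^ (c - 1) * δ ^ c * r ^ (k - c) := by
      intro k hk
      rw [Finset.mem_Icc] at hk
      have e1 : k - 1 = (c - 1) + (k - c) := by omega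
      have e2 : k = c + (k - c) := by omega
      calc (n:ℝ) ^ (k - 1) * δ ^ k
          = (n:ℝ) ^ ((c - 1) + (k - c)) * δ ^ (c + (k - c)) := by rw [← e1, ← e2]
        _ = (n:ℝ) ^ (c - 1) * δ ^ c * r ^ (k - c) := by
            rw [pow_add, pow_add, hrdef, mul_pow]; ring
    rw [Finset.sum_congr rfl hterm, ← Finset.mul_sum]
    have hgeom : ∑ k ∈ Finset.Icc c (n - 1), r ^ (k - c) ≤ 2 := by
      rw [← Finset.sum_image (g := fun k => k - c) (f := fun j : ℕ => r ^ j)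
        (fun a ha b hb hab => by rw [Finset.mem_coe, Finset.mem_Icc] at ha hb; simp only at hab; omega)]
      calc ∑ j ∈ (Finset.Icc c (n - 1)).image (· - c), r ^ j
          ≤ ∑ j ∈ Finset.range n, r ^ j := by
            apply Finset.sum_le_sum_of_subset_of_nonneg
            · intro j hj
              rw [Finset.mem_image] at hj
              obtain ⟨k, hk, rfl⟩ := hj
              rw [Finset.mem_Icc] at hk
              rw [Finset.mem_range]; omega
            · intro j _ _; positivity
        _ ≤ 2 := geom_bound r hr0 hr n
    calc (n : ℝ) ^ (c - 1) * δ ^ c * ∑ k ∈ Finset.Icc c (n - 1), r ^ (k - c)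
        ≤ (n : ℝ) ^ (c - 1) * δ ^ c * 2 :=
          mul_le_mul_of_nonneg_left hgeom (by positivity)
      _ = 2 * (n : ℝ) ^ (c - 1) * δ ^ c := by ring
  calc prox E δ u v = ∑ l ∈ L, ∑ F ∈ T.filter (fun F => g F = l),
        δ ^ F.card * (1 - δ) ^ (E \ F).card := by rw [step1, step2]
    _ ≤ ∑ l ∈ L, δ ^ (l.length - 1) := Finset.sum_le_sum step3
    _ ≤ ∑ k ∈ Finset.Icc c (n - 1), (n : ℝ) ^ (k - 1) * δ ^ k := step4
    _ ≤ 2 * (n : ℝ) ^ (c - 1) * δ ^ c := step5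
end
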